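/- arXiv:2509.21835 — 7 statements merged into one kernel-verified Lean document; each statement's English description precedes it below -/
import Mathlib

section
/- Let Y be a nonempty finite set, let R : Y × Y → ℝ satisfy R(y,y') ≥ 0 for all y ≠ y' and ∑_{y∈Y} R(y,y') = 0 for every y' (each column sums to zero). Fix T > 0, let q₀ be a probability vector on Y, set q→_s := exp(sR)·q₀ for s ∈ [0,T] (matrix exponential applied to the vector), and assume q→_s(y) > 0 for every y ∈ Y and every s ∈ (0,T]. Define the reverse marginals q←_t := q→_{T−t} for t ∈ [0,T), and the reverse rates R←_t(y,y') := R(y',y)·q←_t(y)/q←_t(y') for y ≠ y', with diagonal R←_t(y',y') := −∑_{y≠y'} R←_t(y,y'). Then for every t ∈ [0,T) and every y ∈ Y, the function t ↦ q←_t(y) has derivative at t equal to ∑_{y'∈Y} R←_t(y,y')·q←_t(y'). -/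
open Matrix Finset

attribute [local instance] Matrix.linftyOpNormedRing Matrix.linftyOpNormedAlgebra

/-- The reverse-time marginals of a continuous-time Markov chain on a finite state
space satisfy the reverse Kolmogorov equation with the reverse transition rates. -/
theorem reverse_process_kolmogorov
    {Y : Type*} [Fintype Y] [DecidableEq Y] [Nonempty Y]
    (R : Matrix Y Y ℝ)
    (hoff : ∀ y y', y ≠ y' → 0 ≤ R y y')
    (hcol : ∀ y', ∑ y, R y y' = 0)
    (T : ℝ) (hT : 0 < T)
    (q0 : Y → ℝ) (hq0nonneg : ∀ y, 0 ≤ q0 y) (hq0sum : ∑ y, q0 y = 1)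
    (qf : ℝ → Y → ℝ)
    (hqf : ∀ s, qf s = NormedSpace.exp (s • R) *ᵥ q0)
    (hpos : ∀ s, 0 < s → s ≤ T → ∀ y, 0 < qf s y)
    (qr : ℝ → Y → ℝ) (hqr : ∀ t, qr t = qf (T - t))
    (Rrev : ℝ → Matrix Y Y ℝ)
    (hRrevOff : ∀ t (y y' : Y), y ≠ y' →
      Rrev t y y' = R y' y * qr t y / qr t y')
    (hRrevDiag : ∀ t (y' : Y),
      Rrev t y' y' = -∑ y ∈ Finset.univ.erase y', Rrev t y y') :
    ∀ t, 0 ≤ t → t < T → ∀ y,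
      HasDerivAt (fun s => qr s y) (∑ y', Rrev t y y' * qr t y') t := by
  intro t ht htT y
  have hTt0 : 0 < T - t := by linarith
  have hposqr : ∀ z, 0 < qr t z := fun z => by
    rw [hqr]; exact hpos (T - t) hTt0 (by linarith) z
  -- Step 1: the target value equals -(R *ᵥ qr t) y
  have hval : ∑ y', Rrev t y y' * qr t y' = -(∑ z, R y z * qr t z) := by
    rw [← Finset.add_sum_erase _ (fun y' => Rrev t y y' * qr t y') (Finset.mem_univ y)]
    have h1 : Rrev t y y * qr t y = -∑ z ∈ univ.erase y, R y z * qr t z := by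
      rw [hRrevDiag, neg_mul, Finset.sum_mul, neg_inj]
      refine Finset.sum_congr rfl fun z hz => ?_
      rw [hRrevOff t z y (Finset.ne_of_mem_erase hz)]
      rw [div_mul_cancel₀ _ (hposqr y).ne']
    have h2 : ∑ y' ∈ univ.erase y, Rrev t y y' * qr t y' = -(R y y * qr t y) := by
      have hcong : ∀ y' ∈ univ.erase y, Rrev t y y' * qr t y' = R y' y * qr t y := by
        intro y' hy'
        rw [hRrevOff t y y' (Finset.ne_of_mem_erase hy').symm,
          div_mul_cancel₀ _ (hposqr y').ne']
      rw [Finset.sum_congr rfl hcong, ← Finset.sum_mul]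
      have hs : ∑ y' ∈ univ.erase y, R y' y = -R y y := by
        have h := hcol y
        rw [← Finset.add_sum_erase _ (fun y' => R y' y) (Finset.mem_univ y)] at h
        linarith
      rw [hs]; ring
    rw [h1, h2, ← Finset.add_sum_erase _ (fun z => R y z * qr t z) (Finset.mem_univ y)]
    ring
  rw [hval]
  -- Step 2: derivative of the matrix exponential, composed with s ↦ T - s
  have hE : HasDerivAt (fun u : ℝ => NormedSpace.exp (u • R))
      (R * NormedSpace.exp ((T - t) • R)) (T - t) :=
    hasDerivAt_exp_smul_const' R (T - t)
  have hTs : HasDerivAt (fun s : ℝ => T - s) (-1) t := (hasDerivAt_id t).const_sub T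
  have hcomp : HasDerivAt (fun s : ℝ => NormedSpace.exp ((T - s) • R))
      ((-1 : ℝ) • (R * NormedSpace.exp ((T - t) • R))) t := hE.scomp t hTs
  -- Step 3: apply the continuous linear map M ↦ (M *ᵥ q0) y
  let L : Matrix Y Y ℝ →ₗ[ℝ] ℝ :=
    { toFun := fun M => (M *ᵥ q0) y
      map_add' := fun M N => by simp [Matrix.add_mulVec]
      map_smul' := fun c M => by simp [Matrix.smul_mulVec] }
  have hD : HasDerivAt (fun s => L.toContinuousLinearMap (NormedSpace.exp ((T - s) • R)))
      (L.toContinuousLinearMap ((-1 : ℝ) • (R * NormedSpace.exp ((T - t) • R)))) t :=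
    (L.toContinuousLinearMap.hasFDerivAt).comp_hasDerivAt t hcomp
  have hfun : (fun s => L.toContinuousLinearMap (NormedSpace.exp ((T - s) • R))) =
      fun s => qr s y := by
    funext s
    simp only [LinearMap.coe_toContinuousLinearMap', L, LinearMap.coe_mk, AddHom.coe_mk,
      hqr, hqf]
  have hval2 : L.toContinuousLinearMap ((-1 : ℝ) • (R * NormedSpace.exp ((T - t) • R))) =
      -(∑ z, R y z * qr t z) := by
    simp only [LinearMap.coe_toContinuousLinearMap', L, LinearMap.coe_mk, AddHom.coe_mk]
    rw [Matrix.smul_mulVec, ← Matrix.mulVec_mulVec, ← hqf, ← sub_sub_cancel T t, ← hqr]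
    simp [Matrix.mulVec, dotProduct]
  rw [hfun, hval2] at hD
  exact hD
end

section
/- Under Assumption [A2], for every t > 0 the Kullback–Leibler divergence between q_t and q̃_t satisfies KL(q_t ‖ q̃_t) ≤ (1 + e^{−t})^d − 1. Consequently, for every ε with 0 < ε ≤ 1, if t ≥ ln(4d/ε) then KL(q_t ‖ q̃_t) ≤ ε. -/
open Matrix Finset

/-- The mask token: token `K` in the vocabulary `{1,…,K}`, modeled as the last
element of `Fin K`. -/
def maskTok (K : ℕ) [NeZero K] : Fin K :=
  ⟨K - 1, Nat.sub_lt (Nat.pos_of_ne_zero (NeZero.ne K)) Nat.one_pos⟩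

/-- The number of mask tokens in a sequence. -/
def numK (K d : ℕ) [NeZero K] (y : Fin d → Fin K) : ℕ :=
  (Finset.univ.filter fun i => y i = maskTok K).card

/-- Hamming distance between two sequences. -/
def ham {K d : ℕ} (y y' : Fin d → Fin K) : ℕ :=
  (Finset.univ.filter fun i => y i ≠ y' i).card

/-- The masked (absorbing) forward transition-rate matrix: `R y y' = 1` if
`Ham(y,y') = 1` and the differing coordinate of `y` is the mask token,
`R y' y' = -(d - numK y')`, and `0` otherwise. -/
noncomputable def fwdRate (K d : ℕ) [NeZero K] :
    Matrix (Fin d → Fin K) (Fin d → Fin K) ℝ := fun y y' =>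
  if y = y' then -((d : ℝ) - (numK K d y' : ℝ))
  else if ham y y' = 1 ∧ ∀ i, y i ≠ y' i → y i = maskTok K then 1 else 0

/-- The forward marginal at time `t`: `q_t = exp(tR) · q₀`. -/
noncomputable def qt (K d : ℕ) [NeZero K] (q0 : (Fin d → Fin K) → ℝ) (t : ℝ) :
    (Fin d → Fin K) → ℝ :=
  NormedSpace.exp (t • fwdRate K d) *ᵥ q0

/-- The comparison distribution `q̃_t(y) = e^{-t(d - numK y)} / (1+e^{-t})^d`. -/
noncomputable def qTilde (K d : ℕ) [NeZero K] (t : ℝ) (y : Fin d → Fin K) : ℝ :=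
  Real.exp (-t * ((d : ℝ) - (numK K d y : ℝ))) / (1 + Real.exp (-t)) ^ d

/-- KL divergence between two nonnegative vectors on a finite set. -/
noncomputable def KLdiv {Y : Type*} [Fintype Y] (p q : Y → ℝ) : ℝ :=
  ∑ y, if 0 < p y then p y * Real.log (p y / q y) else 0

section Aux

variable (K d : ℕ) [NeZero K]

/-- marginal mass of `q0` over sequences compatible with `y` on its unmasked coords -/
noncomputable def sfun (q0 : (Fin d → Fin K) → ℝ) (y : Fin d → Fin K) : ℝ :=
  ∑ y0 ∈ Finset.univ.filter (fun y0 => ∀ i, y i ≠ maskTok K → y0 i = y i), q0 y0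

/-- candidate explicit formula for `q_t` -/
noncomputable def vfun (q0 : (Fin d → Fin K) → ℝ) (t : ℝ) (y : Fin d → Fin K) : ℝ :=
  Real.exp (-(t * ((d : ℝ) - (numK K d y : ℝ)))) * (1 - Real.exp (-t)) ^ numK K d y
    * sfun K d q0 y

variable {K d}

lemma numK_le (y : Fin d → Fin K) : numK K d y ≤ d :=
  (Finset.card_filter_le _ _).trans (by simp)

lemma numK_pos {y : Fin d → Fin K} {i : Fin d} (h : y i = maskTok K) : 1 ≤ numK K d y :=
  Finset.card_pos.mpr ⟨i, by simp [h]⟩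

lemma filter_update {y : Fin d → Fin K} {i : Fin d} {b : Fin K}
    (hyi : y i = maskTok K) (hb : b ≠ maskTok K) :
    (Finset.univ.filter fun j => Function.update y i b j = maskTok K)
      = (Finset.univ.filter fun j => y j = maskTok K).erase i := by
  ext j
  rcases eq_or_ne j i with rfl | hj
  · simp [Function.update_self, hb]
  · simp [Function.update_of_ne hj, hj]

lemma numK_update {y : Fin d → Fin K} {i : Fin d} {b : Fin K}
    (hyi : y i = maskTok K) (hb : b ≠ maskTok K) :
    numK K d (Function.update y i b) = numK K d y - 1 := by
  unfold numK
  rw [filter_update hyi hb, Finset.card_erase_of_mem (by simp [hyi])]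

lemma numK_eq_zero_iff {y : Fin d → Fin K} :
    numK K d y = 0 ↔ ∀ i, y i ≠ maskTok K := by
  unfold numK
  rw [Finset.card_eq_zero, Finset.filter_eq_empty_iff]
  simp

end Aux

section Marg

variable {K d : ℕ} [NeZero K] {q0 : (Fin d → Fin K) → ℝ}

lemma q0_eq_zero (hq0nonneg : ∀ y, 0 ≤ q0 y)
    (hA2 : ∀ y, 0 < q0 y ↔ numK K d y = 0) {y : Fin d → Fin K}
    (hy : numK K d y ≠ 0) : q0 y = 0 :=
  le_antisymm (not_lt.mp fun h => hy ((hA2 y).mp h)) (hq0nonneg y)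

lemma sfun_update {y : Fin d → Fin K} {i : Fin d} {b : Fin K}
    (hyi : y i = maskTok K) (hb : b ≠ maskTok K) :
    sfun K d q0 (Function.update y i b)
      = ∑ y0 ∈ Finset.univ.filter
          (fun y0 => (∀ j, y j ≠ maskTok K → y0 j = y j) ∧ y0 i = b), q0 y0 := by
  unfold sfun
  congr 1
  ext y0
  simp only [Finset.mem_filter, Finset.mem_univ, true_and]
  constructor
  · intro h
    refine ⟨fun j hj => ?_, ?_⟩
    · rcases eq_or_ne j i with rfl | hji
      · exact absurd hyi hj
      · have := h j (by rw [Function.update_of_ne hji]; exact hj)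
        rwa [Function.update_of_ne hji] at this
    · have := h i (by rw [Function.update_self]; exact hb)
      rwa [Function.update_self] at this
  · rintro ⟨h1, h2⟩ j hj
    rcases eq_or_ne j i with rfl | hji
    · rwa [Function.update_self]
    · rw [Function.update_of_ne hji] at hj ⊢
      exact h1 j hj

lemma sfun_marg (hq0nonneg : ∀ y, 0 ≤ q0 y)
    (hA2 : ∀ y, 0 < q0 y ↔ numK K d y = 0)
    {y : Fin d → Fin K} {i : Fin d} (hyi : y i = maskTok K) :
    ∑ b ∈ Finset.univ.erase (maskTok K), sfun K d q0 (Function.update y i b)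
      = sfun K d q0 y := by
  have step1 : ∀ b ∈ Finset.univ.erase (maskTok K),
      sfun K d q0 (Function.update y i b)
        = ∑ y0 ∈ Finset.univ.filter (fun y0 => ∀ j, y j ≠ maskTok K → y0 j = y j),
            if y0 i = b then q0 y0 else 0 := by
    intro b hb
    rw [sfun_update hyi (Finset.mem_erase.mp hb).1]
    rw [← Finset.sum_filter, Finset.filter_filter]
  rw [Finset.sum_congr rfl step1, Finset.sum_comm]
  unfold sfun
  refine Finset.sum_congr rfl fun y0 hy0 => ?_
  rw [Finset.sum_ite_eq (Finset.univ.erase (maskTok K)) (y0 i) (fun _ => q0 y0)]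
  rcases eq_or_ne (y0 i) (maskTok K) with h | h
  · simp only [Finset.mem_erase, h, ne_eq, not_true_eq_false, false_and, if_false]
    exact (q0_eq_zero hq0nonneg hA2 (fun h0 => (numK_eq_zero_iff.mp h0 i) h)).symm
  · simp [h]

lemma sfun_nonneg (hq0nonneg : ∀ y, 0 ≤ q0 y) (y : Fin d → Fin K) :
    0 ≤ sfun K d q0 y :=
  Finset.sum_nonneg fun y0 _ => hq0nonneg y0

lemma sfun_le_one (hq0nonneg : ∀ y, 0 ≤ q0 y) (hq0sum : ∑ y, q0 y = 1)
    (y : Fin d → Fin K) : sfun K d q0 y ≤ 1 := by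
  rw [← hq0sum]
  exact Finset.sum_le_sum_of_subset_of_nonneg (Finset.filter_subset _ _)
    (fun y0 _ _ => hq0nonneg y0)

lemma vfun_zero (hq0nonneg : ∀ y, 0 ≤ q0 y)
    (hA2 : ∀ y, 0 < q0 y ↔ numK K d y = 0) :
    vfun K d q0 0 = q0 := by
  funext y
  unfold vfun
  rcases eq_or_ne (numK K d y) 0 with h | h
  · have hfilter : (Finset.univ.filter
        fun y0 => ∀ i, y i ≠ maskTok K → y0 i = y i) = {y} := by
      ext y0
      simp only [Finset.mem_filter, Finset.mem_univ, true_and, Finset.mem_singleton]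
      constructor
      · intro hc; funext i; exact hc i (numK_eq_zero_iff.mp h i)
      · rintro rfl; intro i _; rfl
    rw [h]
    unfold sfun
    rw [hfilter, Finset.sum_singleton]
    simp
  · rw [neg_zero, Real.exp_zero]
    simp only [sub_self, ne_eq, h, not_false_eq_true, zero_pow, mul_zero, zero_mul]
    exact (q0_eq_zero hq0nonneg hA2 h).symm

end Marg

section Rate

variable {K d : ℕ} [NeZero K] {q0 : (Fin d → Fin K) → ℝ}

lemma offdiag_image (y : Fin d → Fin K) :
    (Finset.univ.erase y).filter
        (fun y' => ham y y' = 1 ∧ ∀ i, y i ≠ y' i → y i = maskTok K)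
      = ((Finset.univ.filter fun i => y i = maskTok K) ×ˢ
          (Finset.univ.erase (maskTok K))).image
          (fun p => Function.update y p.1 p.2) := by
  ext y'
  simp only [Finset.mem_filter, Finset.mem_erase, Finset.mem_univ, true_and, and_true,
    Finset.mem_image, Finset.mem_product]
  constructor
  · rintro ⟨hne, hham, hmask⟩
    obtain ⟨i, hi⟩ := Finset.card_eq_one.mp hham
    have himem : i ∈ Finset.univ.filter (fun j => y j ≠ y' j) := by
      rw [hi]; exact Finset.mem_singleton_self i
    have hyi : y i ≠ y' i := (Finset.mem_filter.mp himem).2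
    have hmaski : y i = maskTok K := hmask i hyi
    have heq : ∀ j, j ≠ i → y j = y' j := by
      intro j hj
      by_contra hc
      have : j ∈ Finset.univ.filter (fun j => y j ≠ y' j) := by
        simp [hc]
      rw [hi, Finset.mem_singleton] at this
      exact hj this
    refine ⟨(i, y' i), ⟨hmaski, ?_⟩, ?_⟩
    · rw [← hmaski]; exact fun hc => hyi hc.symm
    · funext j
      rcases eq_or_ne j i with rfl | hj
      · rw [Function.update_self]
      · rw [Function.update_of_ne hj]
        exact heq j hj
  · rintro ⟨⟨i, b⟩, ⟨hmaski, hb⟩, rfl⟩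
    have hbi : y i ≠ Function.update y i b i := by
      rw [Function.update_self, hmaski]
      exact fun hc => hb hc.symm
    have hfil : (Finset.univ.filter fun j => y j ≠ Function.update y i b j) = {i} := by
      ext j
      simp only [Finset.mem_filter, Finset.mem_univ, true_and, Finset.mem_singleton]
      rcases eq_or_ne j i with rfl | hj
      · simpa using hbi
      · simp [Function.update_of_ne hj, hj]
    refine ⟨?_, ?_, ?_⟩
    · intro hc; rw [hc] at hbi; exact hbi rfl
    · unfold ham; rw [hfil]; simp
    · intro j hj
      have : j ∈ ({i} : Finset (Fin d)) := by rw [← hfil]; simp [hj]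
      rw [Finset.mem_singleton] at this
      rw [this]; exact hmaski

lemma update_injOn (y : Fin d → Fin K) :
    Set.InjOn (fun p : Fin d × Fin K => Function.update y p.1 p.2)
      ((Finset.univ.filter fun i => y i = maskTok K) ×ˢ
        (Finset.univ.erase (maskTok K))) := by
  rintro ⟨i, b⟩ hib ⟨i', b'⟩ hib' heq
  simp only [Finset.coe_product, Set.mem_prod, Finset.mem_coe, Finset.mem_filter,
    Finset.mem_univ, true_and, Finset.mem_erase] at hib hib'
  rcases eq_or_ne i i' with rfl | hii
  · have := congrFun heq i
    simp only [Function.update_self] at this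
    rw [this]
  · exfalso
    have := congrFun heq i
    simp only [Function.update_self, Function.update_of_ne hii] at this
    exact hib.2.1 (this.trans hib.1)

lemma rate_apply (hq0nonneg : ∀ y, 0 ≤ q0 y)
    (hA2 : ∀ y, 0 < q0 y ↔ numK K d y = 0) (t : ℝ) (y : Fin d → Fin K) :
    ∑ y', fwdRate K d y y' * vfun K d q0 t y'
      = (numK K d y : ℝ) * (Real.exp (-(t * ((d : ℝ) - (numK K d y : ℝ) + 1)))
            * (1 - Real.exp (-t)) ^ (numK K d y - 1) * sfun K d q0 y)
        + -((d : ℝ) - (numK K d y : ℝ)) * vfun K d q0 t y := by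
  rw [← Finset.sum_erase_add _ _ (Finset.mem_univ y)]
  have hdiag : fwdRate K d y y = -((d : ℝ) - (numK K d y : ℝ)) := by
    simp [fwdRate]
  rw [hdiag]
  congr 1
  have hstep : ∀ y' ∈ Finset.univ.erase y,
      fwdRate K d y y' * vfun K d q0 t y'
        = if ham y y' = 1 ∧ ∀ i, y i ≠ y' i → y i = maskTok K
            then vfun K d q0 t y' else 0 := by
    intro y' hy'
    have hne : y ≠ y' := fun hc => (Finset.mem_erase.mp hy').1 hc.symm
    rw [fwdRate, if_neg hne]
    split_ifs <;> simp
  rw [Finset.sum_congr rfl hstep, ← Finset.sum_filter, offdiag_image y,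
    Finset.sum_image (fun p hp p' hp' h => update_injOn y (by exact_mod_cast hp)
      (by exact_mod_cast hp') h)]
  rw [Finset.sum_product]
  have hval : ∀ i ∈ (Finset.univ.filter fun i => y i = maskTok K),
      ∑ b ∈ Finset.univ.erase (maskTok K), vfun K d q0 t (Function.update y i b)
        = Real.exp (-(t * ((d : ℝ) - (numK K d y : ℝ) + 1)))
            * (1 - Real.exp (-t)) ^ (numK K d y - 1) * sfun K d q0 y := by
    intro i hi
    have hyi : y i = maskTok K := (Finset.mem_filter.mp hi).2
    have h1m : 1 ≤ numK K d y := numK_pos hyi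
    have hsum : ∀ b ∈ Finset.univ.erase (maskTok K),
        vfun K d q0 t (Function.update y i b)
          = Real.exp (-(t * ((d : ℝ) - (numK K d y : ℝ) + 1)))
              * (1 - Real.exp (-t)) ^ (numK K d y - 1)
              * sfun K d q0 (Function.update y i b) := by
      intro b hb
      have hb' : b ≠ maskTok K := (Finset.mem_erase.mp hb).1
      unfold vfun
      rw [numK_update hyi hb']
      congr 2
      rw [Nat.cast_sub h1m]
      push_cast
      ring_nf
    rw [Finset.sum_congr rfl hsum, ← Finset.mul_sum, sfun_marg hq0nonneg hA2 hyi]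
  rw [Finset.sum_congr rfl hval, Finset.sum_const, nsmul_eq_mul]
  rfl

end Rate

section Norm

variable {K d : ℕ} [NeZero K] {q0 : (Fin d → Fin K) → ℝ}

lemma powerset_sum (x z : ℝ) :
    ∑ S ∈ (Finset.univ : Finset (Fin d)).powerset, x ^ S.card * z ^ (d - S.card)
      = (x + z) ^ d := by
  have := Finset.prod_add (fun _ : Fin d => x) (fun _ : Fin d => z) Finset.univ
  simp only [Finset.prod_const, Finset.card_univ, Fintype.card_fin] at this
  rw [this]
  refine Finset.sum_congr rfl fun S hS => ?_
  rw [Finset.card_sdiff_of_subset (Finset.mem_powerset.mp hS)]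
  simp

lemma inner_sum_one (t : ℝ) {y0 : Fin d → Fin K} (h0 : numK K d y0 = 0) :
    ∑ y ∈ Finset.univ.filter (fun y => ∀ i, y i ≠ maskTok K → y0 i = y i),
      Real.exp (-(t * ((d : ℝ) - (numK K d y : ℝ)))) * (1 - Real.exp (-t)) ^ numK K d y
      = 1 := by
  have hy0 : ∀ i, y0 i ≠ maskTok K := numK_eq_zero_iff.mp h0
  have key : ∑ y ∈ Finset.univ.filter (fun y => ∀ i, y i ≠ maskTok K → y0 i = y i),
      Real.exp (-(t * ((d : ℝ) - (numK K d y : ℝ)))) * (1 - Real.exp (-t)) ^ numK K d y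
      = ∑ S ∈ (Finset.univ : Finset (Fin d)).powerset,
          Real.exp (-(t * ((d : ℝ) - (S.card : ℝ)))) * (1 - Real.exp (-t)) ^ S.card := by
    refine Finset.sum_nbij' (fun y => Finset.univ.filter fun j => y j = maskTok K)
      (fun S => fun j => if j ∈ S then maskTok K else y0 j) ?_ ?_ ?_ ?_ ?_
    · intro y _; exact Finset.mem_powerset.mpr (Finset.filter_subset _ _)
    · intro S _
      simp only [Finset.mem_filter, Finset.mem_univ, true_and]
      intro i hi
      split_ifs at hi ⊢ with h
      · exact absurd rfl hi
      · rfl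
    · intro y hy
      simp only [Finset.mem_filter, Finset.mem_univ, true_and] at hy
      funext j
      by_cases h : y j = maskTok K
      · simp [h]
      · simp only [Finset.mem_filter, Finset.mem_univ, true_and, h, if_false]
        exact hy j h
    · intro S _
      ext j
      simp only [Finset.mem_filter, Finset.mem_univ, true_and]
      by_cases h : j ∈ S
      · simp [h]
      · simp [h, hy0 j]
    · intro y _; rfl
  rw [key]
  have hterm : ∀ S ∈ (Finset.univ : Finset (Fin d)).powerset,
      Real.exp (-(t * ((d : ℝ) - (S.card : ℝ)))) * (1 - Real.exp (-t)) ^ S.card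
        = (1 - Real.exp (-t)) ^ S.card * Real.exp (-t) ^ (d - S.card) := by
    intro S hS
    have hSd : S.card ≤ d := by
      have := Finset.card_le_card (Finset.mem_powerset.mp hS)
      simpa using this
    rw [← Real.exp_nat_mul]
    rw [mul_comm]
    congr 2
    rw [Nat.cast_sub hSd]
    ring
  rw [Finset.sum_congr rfl hterm, powerset_sum]
  simp

lemma sum_vfun (hq0nonneg : ∀ y, 0 ≤ q0 y) (hq0sum : ∑ y, q0 y = 1)
    (hA2 : ∀ y, 0 < q0 y ↔ numK K d y = 0) (t : ℝ) :
    ∑ y, vfun K d q0 t y = 1 := by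
  have expand : ∀ y : Fin d → Fin K, vfun K d q0 t y
      = ∑ y0, (if ∀ i, y i ≠ maskTok K → y0 i = y i then
          Real.exp (-(t * ((d : ℝ) - (numK K d y : ℝ))))
            * (1 - Real.exp (-t)) ^ numK K d y * q0 y0 else 0) := by
    intro y
    rw [← Finset.sum_filter]
    unfold vfun sfun
    rw [Finset.mul_sum]
  rw [Finset.sum_congr rfl (fun y _ => expand y), Finset.sum_comm]
  have inner : ∀ y0 : Fin d → Fin K,
      (∑ y, if ∀ i, y i ≠ maskTok K → y0 i = y i then
          Real.exp (-(t * ((d : ℝ) - (numK K d y : ℝ))))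
            * (1 - Real.exp (-t)) ^ numK K d y * q0 y0 else 0) = q0 y0 := by
    intro y0
    rcases eq_or_ne (numK K d y0) 0 with h0 | h0
    · rw [Finset.sum_ite, Finset.sum_const_zero, add_zero, ← Finset.sum_mul]
      rw [inner_sum_one t h0, one_mul]
    · rw [q0_eq_zero hq0nonneg hA2 h0]
      simp
  rw [Finset.sum_congr rfl (fun y0 _ => inner y0), hq0sum]

end Norm

section Analysis

variable (K d : ℕ) [NeZero K]

attribute [local instance] Matrix.linftyOpSemiNormedRing Matrix.linftyOpNormedRing
  Matrix.linftyOpNormedAlgebra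

/-- `vfun` arranged as a matrix with constant rows columns. -/
noncomputable def Vm (q0 : (Fin d → Fin K) → ℝ) (t : ℝ) :
    Matrix (Fin d → Fin K) (Fin d → Fin K) ℝ :=
  Matrix.of fun y _ => vfun K d q0 t y

/-- time derivative of `vfun`. -/
noncomputable def dvfun (q0 : (Fin d → Fin K) → ℝ) (t : ℝ) (y : Fin d → Fin K) : ℝ :=
  (numK K d y : ℝ) * (Real.exp (-(t * ((d : ℝ) - (numK K d y : ℝ) + 1)))
      * (1 - Real.exp (-t)) ^ (numK K d y - 1) * sfun K d q0 y)
    + -((d : ℝ) - (numK K d y : ℝ)) * vfun K d q0 t y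

noncomputable def dVm (q0 : (Fin d → Fin K) → ℝ) (t : ℝ) :
    Matrix (Fin d → Fin K) (Fin d → Fin K) ℝ :=
  Matrix.of fun y _ => dvfun K d q0 t y

variable {K d} {q0 : (Fin d → Fin K) → ℝ}

lemma AVm (hq0nonneg : ∀ y, 0 ≤ q0 y)
    (hA2 : ∀ y, 0 < q0 y ↔ numK K d y = 0) (t : ℝ) :
    fwdRate K d * Vm K d q0 t = dVm K d q0 t := by
  ext y z
  rw [Matrix.mul_apply]
  exact rate_apply hq0nonneg hA2 t y

lemma hasDerivAt_vfun (t : ℝ) (y : Fin d → Fin K) :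
    HasDerivAt (fun u => vfun K d q0 u y) (dvfun K d q0 t y) t := by
  set m := numK K d y with hm
  set c : ℝ := (d : ℝ) - (m : ℝ) with hc
  have h1 : HasDerivAt (fun u : ℝ => -(u * c)) (-c) t := (hasDerivAt_mul_const c).neg
  have hexp1 := h1.exp
  have h2 : HasDerivAt (fun u : ℝ => -u) (-1 : ℝ) t := hasDerivAt_neg t
  have hexp2 := h2.exp
  have h3 := hexp2.const_sub 1
  have h4 := h3.pow m
  have h5 := (hexp1.mul h4).mul_const (sfun K d q0 y)
  refine h5.congr_deriv ?_
  have hsplit : Real.exp (-(t * (c + 1))) = Real.exp (-(t * c)) * Real.exp (-t) := by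
    rw [← Real.exp_add]; ring_nf
  unfold dvfun vfun
  rw [← hm, ← hc, hsplit]
  rw [Pi.pow_apply]
  ring

lemma hasDerivAt_Vm (t : ℝ) :
    HasDerivAt (fun u => Vm K d q0 u) (dVm K d q0 t) t := by
  classical
  have hrep : ∀ u, Vm K d q0 u
      = ∑ z, vfun K d q0 u z • (Matrix.of fun y (_ : Fin d → Fin K) =>
          if y = z then (1 : ℝ) else 0) := by
    intro u
    ext y w
    simp only [Matrix.sum_apply, Matrix.smul_apply, Matrix.of_apply, smul_eq_mul,
      mul_ite, mul_one, mul_zero]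
    rw [Finset.sum_ite_eq Finset.univ y (fun z => vfun K d q0 u z)]
    simp [Vm]
  have hrep' : dVm K d q0 t
      = ∑ z, dvfun K d q0 t z • (Matrix.of fun y (_ : Fin d → Fin K) =>
          if y = z then (1 : ℝ) else 0) := by
    ext y w
    simp only [Matrix.sum_apply, Matrix.smul_apply, Matrix.of_apply, smul_eq_mul,
      mul_ite, mul_one, mul_zero]
    rw [Finset.sum_ite_eq Finset.univ y (fun z => dvfun K d q0 t z)]
    simp [dVm]
  simp only [hrep, hrep']
  exact HasDerivAt.fun_sum fun z _ => (hasDerivAt_vfun t z).smul_const _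

lemma exp_mul_Q0 (hq0nonneg : ∀ y, 0 ≤ q0 y)
    (hA2 : ∀ y, 0 < q0 y ↔ numK K d y = 0) (t : ℝ) :
    NormedSpace.exp (t • fwdRate K d)
        * (Matrix.of fun y (_ : Fin d → Fin K) => q0 y) = Vm K d q0 t := by
  classical
  set A := fwdRate K d with hA
  have hg : ∀ u : ℝ,
      HasDerivAt (fun u => NormedSpace.exp (u • (-A)) * Vm K d q0 u)
        (0 : Matrix (Fin d → Fin K) (Fin d → Fin K) ℝ) u := by
    intro u
    have h1 := hasDerivAt_exp_smul_const (-A) u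
    have h2 := hasDerivAt_Vm (q0 := q0) u
    have h3 := h1.mul h2
    refine h3.congr_deriv ?_
    rw [← AVm hq0nonneg hA2 u, ← hA]
    rw [mul_neg, neg_mul, ← mul_assoc, neg_add_cancel]
  have hdiff : Differentiable ℝ
      (fun u : ℝ => NormedSpace.exp (u • (-A)) * Vm K d q0 u) :=
    fun u => (hg u).differentiableAt
  have hconst := is_const_of_deriv_eq_zero hdiff (fun u => (hg u).deriv) t 0
  have h0 : NormedSpace.exp ((0:ℝ) • (-A)) * Vm K d q0 0
      = Matrix.of fun y (_ : Fin d → Fin K) => q0 y := by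
    rw [zero_smul, NormedSpace.exp_zero, one_mul]
    ext y w
    simp [Vm, vfun_zero hq0nonneg hA2]
  rw [h0] at hconst
  calc NormedSpace.exp (t • A) * (Matrix.of fun y (_ : Fin d → Fin K) => q0 y)
      = NormedSpace.exp (t • A) * (NormedSpace.exp (t • (-A)) * Vm K d q0 t) := by
        rw [hconst]
    _ = (NormedSpace.exp (t • A) * NormedSpace.exp (t • (-A))) * Vm K d q0 t := by
        rw [mul_assoc]
    _ = Vm K d q0 t := by
        rw [← Matrix.exp_add_of_commute _ _
          (((Commute.refl A).neg_right.smul_right t).smul_left t)]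
        rw [smul_neg, add_neg_cancel, NormedSpace.exp_zero, one_mul]

lemma qt_eq_vfun (hq0nonneg : ∀ y, 0 ≤ q0 y)
    (hA2 : ∀ y, 0 < q0 y ↔ numK K d y = 0) (t : ℝ) :
    qt K d q0 t = vfun K d q0 t := by
  classical
  funext y
  have h := congrFun (congrFun (exp_mul_Q0 hq0nonneg hA2 t) y) y
  rw [Matrix.mul_apply] at h
  simp only [Matrix.of_apply] at h
  unfold qt
  rw [Matrix.mulVec]
  exact h

end Analysis

section KL

variable {K d : ℕ} [NeZero K] {q0 : (Fin d → Fin K) → ℝ}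

lemma kl_bound (hq0nonneg : ∀ y, 0 ≤ q0 y) (hq0sum : ∑ y, q0 y = 1)
    (hA2 : ∀ y, 0 < q0 y ↔ numK K d y = 0) {t : ℝ} (ht : 0 < t) :
    KLdiv (qt K d q0 t) (qTilde K d t) ≤ (d : ℝ) * Real.log (1 + Real.exp (-t)) := by
  rw [qt_eq_vfun hq0nonneg hA2 t]
  set a := Real.exp (-t) with ha
  have ha0 : 0 < a := Real.exp_pos _
  have ha1 : a < 1 := Real.exp_lt_one_iff.mpr (by linarith)
  set D := (d : ℝ) * Real.log (1 + a) with hD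
  have hD0 : 0 ≤ D := mul_nonneg (Nat.cast_nonneg d) (Real.log_nonneg (by linarith))
  have hvnonneg : ∀ y, 0 ≤ vfun K d q0 t y := by
    intro y
    unfold vfun
    exact mul_nonneg (mul_nonneg (Real.exp_pos _).le
      (pow_nonneg (by linarith) _)) (sfun_nonneg hq0nonneg y)
  have key : ∀ y : Fin d → Fin K,
      (if 0 < vfun K d q0 t y then vfun K d q0 t y
          * Real.log (vfun K d q0 t y / qTilde K d t y) else 0)
        ≤ vfun K d q0 t y * D := by
    intro y
    split_ifs with h
    · refine mul_le_mul_of_nonneg_left ?_ (hvnonneg y)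
      set m := numK K d y with hm
      have hEP : 0 < Real.exp (-(t * ((d : ℝ) - (m : ℝ)))) * (1 - a) ^ m := by
        have : (0:ℝ) < 1 - a := by linarith
        positivity
      have hs : 0 < sfun K d q0 y := by
        by_contra hns
        push_neg at hns
        have hle : vfun K d q0 t y ≤ 0 :=
          mul_nonpos_of_nonneg_of_nonpos (le_of_lt hEP) hns
        linarith
      have hratio : vfun K d q0 t y / qTilde K d t y
          = (1 - a) ^ m * sfun K d q0 y * (1 + a) ^ d := by
        unfold vfun qTilde
        rw [neg_mul]
        rw [← hm, ← ha]
        have hC : ((1:ℝ) + a) ^ d ≠ 0 := by positivity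
        have hE : Real.exp (-(t * ((d : ℝ) - (m : ℝ)))) ≠ 0 := Real.exp_ne_zero _
        field_simp
      rw [hratio]
      have hs1 : sfun K d q0 y ≤ 1 := sfun_le_one hq0nonneg hq0sum y
      have hP : (0:ℝ) < (1 - a) ^ m := by
        have : (0:ℝ) < 1 - a := by linarith
        positivity
      rw [Real.log_mul (by positivity) (by positivity),
        Real.log_mul (ne_of_gt hP) (ne_of_gt hs), Real.log_pow, Real.log_pow]
      have h1 : (m : ℝ) * Real.log (1 - a) ≤ 0 :=
        mul_nonpos_of_nonneg_of_nonpos (Nat.cast_nonneg m)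
          (Real.log_nonpos (by linarith) (by linarith))
      have h2 : Real.log (sfun K d q0 y) ≤ 0 := Real.log_nonpos (le_of_lt hs) hs1
      rw [hD]
      linarith
    · push_neg at h
      have : vfun K d q0 t y = 0 := le_antisymm h (hvnonneg y)
      rw [this, zero_mul]
  calc KLdiv (vfun K d q0 t) (qTilde K d t)
      ≤ ∑ y, vfun K d q0 t y * D := Finset.sum_le_sum fun y _ => key y
    _ = (∑ y, vfun K d q0 t y) * D := by rw [Finset.sum_mul]
    _ = D := by rw [sum_vfun hq0nonneg hq0sum hA2 t, one_mul]

end KL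

/-- The KL divergence between the forward marginal `q_t` and the factorized
approximation `q̃_t` decreases exponentially:
`KL(q_t ‖ q̃_t) ≤ (1+e^{-t})^d - 1`, and it is at most `ε` once `t ≥ ln(4d/ε)`. -/
theorem kl_forward_approx (K d : ℕ) [NeZero K] (hK : 2 ≤ K) (hd : 1 ≤ d)
    (q0 : (Fin d → Fin K) → ℝ)
    (hq0nonneg : ∀ y, 0 ≤ q0 y) (hq0sum : ∑ y, q0 y = 1)
    (hA2 : ∀ y, 0 < q0 y ↔ numK K d y = 0) :
    (∀ t : ℝ, 0 < t →
      KLdiv (qt K d q0 t) (qTilde K d t) ≤ (1 + Real.exp (-t)) ^ d - 1) ∧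
    (∀ ε : ℝ, 0 < ε → ε ≤ 1 → ∀ t : ℝ, Real.log (4 * d / ε) ≤ t →
      KLdiv (qt K d q0 t) (qTilde K d t) ≤ ε) := by
  have part1 : ∀ t : ℝ, 0 < t →
      KLdiv (qt K d q0 t) (qTilde K d t) ≤ (1 + Real.exp (-t)) ^ d - 1 := by
    intro t ht
    have h1 := kl_bound hq0nonneg hq0sum hA2 ht
    set a := Real.exp (-t) with ha
    have ha0 : 0 < a := Real.exp_pos _
    have hlog : Real.log (1 + a) ≤ a := by
      have := Real.log_le_sub_one_of_pos (x := 1 + a) (by linarith)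
      linarith
    have hbern : 1 + (d : ℝ) * a ≤ (1 + a) ^ d := by
      have := one_add_mul_le_pow (a := a) (by linarith) d
      linarith
    have h2 : (d : ℝ) * Real.log (1 + a) ≤ (d : ℝ) * a :=
      mul_le_mul_of_nonneg_left hlog (Nat.cast_nonneg d)
    linarith
  refine ⟨part1, ?_⟩
  intro ε hε hε1 t ht
  have hd1 : (1 : ℝ) ≤ (d : ℝ) := by exact_mod_cast hd
  have h4d : (0:ℝ) < 4 * d := by linarith
  have h1 : (1:ℝ) < 4 * d / ε := by
    rw [lt_div_iff₀ hε]
    nlinarith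
  have ht0 : 0 < t := lt_of_lt_of_le (Real.log_pos h1) ht
  have ha : Real.exp (-t) ≤ ε / (4 * d) := by
    calc Real.exp (-t) ≤ Real.exp (-(Real.log (4 * d / ε))) :=
          Real.exp_le_exp.mpr (by linarith)
      _ = ε / (4 * d) := by
          rw [← Real.log_inv, inv_div, Real.exp_log (by positivity)]
  set a := Real.exp (-t) with hadef
  have ha0 : 0 < a := Real.exp_pos _
  have hpow : (1 + a) ^ d ≤ Real.exp ((d : ℝ) * a) := by
    have h1a : 1 + a ≤ Real.exp a := by
      have := Real.add_one_le_exp a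
      linarith
    calc (1 + a) ^ d ≤ (Real.exp a) ^ d :=
          pow_le_pow_left₀ (by linarith) h1a d
      _ = Real.exp ((d : ℝ) * a) := (Real.exp_nat_mul a d).symm
  set u := (d : ℝ) * a with hu
  have hu0 : 0 ≤ u := by positivity
  have huε : u ≤ ε / 4 := by
    have hdne : (d : ℝ) ≠ 0 := by linarith
    have : (d : ℝ) * (ε / (4 * d)) = ε / 4 := by field_simp
    calc u ≤ (d : ℝ) * (ε / (4 * d)) :=
          mul_le_mul_of_nonneg_left ha (by linarith)
      _ = ε / 4 := this
  have h1u : 1 - u ≤ Real.exp (-u) := by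
    have := Real.add_one_le_exp (-u)
    linarith
  have hEu : Real.exp u * (1 - u) ≤ 1 := by
    calc Real.exp u * (1 - u) ≤ Real.exp u * Real.exp (-u) :=
          mul_le_mul_of_nonneg_left h1u (Real.exp_pos u).le
      _ = 1 := by rw [← Real.exp_add, add_neg_cancel, Real.exp_zero]
  have hfin : Real.exp u - 1 ≤ ε := by
    nlinarith [Real.exp_pos u, hEu, huε, hu0, hε1, hε]
  have := part1 t ht0
  have hchain : (1 + a) ^ d - 1 ≤ ε := by
    have := hpow
    linarith
  linarith
end

section
/- For every u ≥ 0 and all y, y' ∈ Y, the (y,y') entry of the matrix exponential exp(uR) equals ∏_{i=1}^d m_u(y_i, y'_i), where m_u(a,b) := 1 if a = b = K; m_u(a,b) := e^{−u} if a = b ≠ K; m_u(a,b) := 1 − e^{−u} if a = K and b ≠ K; and m_u(a,b) := 0 otherwise. -/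
open Matrix Finset

/-- The single-coordinate transition kernel `m_u`. -/
noncomputable def mKer (K : ℕ) [NeZero K] (u : ℝ) (a b : Fin K) : ℝ :=
  if a = maskTok K ∧ b = maskTok K then 1
  else if a = b then Real.exp (-u)
  else if a = maskTok K then 1 - Real.exp (-u)
  else 0

theorem exp_of_sq_neg {A : Type*} [NormedRing A] [NormedAlgebra ℝ A] [CompleteSpace A]
    (X : A) (hX : X * X = -X) (u : ℝ) :
    NormedSpace.exp (u • X) = 1 + (1 - Real.exp (-u)) • X := by
  have hpow : ∀ n : ℕ, X ^ (n + 1) = ((-1 : ℝ) ^ n) • X := by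
    intro n
    induction n with
    | zero => simp
    | succ n ih =>
      rw [pow_succ, ih, smul_mul_assoc, hX, pow_succ, smul_neg, mul_neg_one, neg_smul]
  have hs : Summable (fun n : ℕ => ((n.factorial : ℝ))⁻¹ • (u • X) ^ n) :=
    NormedSpace.expSeries_summable' (𝕂 := ℝ) (u • X)
  have hsum0 : Summable (fun n : ℕ => ((n.factorial : ℝ))⁻¹ * (-u) ^ n) := by
    simpa [div_eq_mul_inv, mul_comm] using Real.summable_pow_div_factorial (-u)
  have hsum1 : Summable (fun n : ℕ => (((n + 1).factorial : ℝ))⁻¹ * (-u) ^ (n + 1)) := by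
    have := hsum0.comp_injective Nat.succ_injective
    exact this
  have hterm : ∀ n : ℕ, (((n + 1).factorial : ℝ))⁻¹ • (u • X) ^ (n + 1)
      = (-((((n + 1) : ℕ).factorial : ℝ)⁻¹ * (-u) ^ (n + 1))) • X := by
    intro n
    rw [smul_pow, hpow n, smul_smul, smul_smul]
    congr 1
    rw [neg_pow, pow_succ]
    ring
  have hval : (∑' n : ℕ, (((n + 1).factorial : ℝ))⁻¹ * (-u) ^ (n + 1)) = Real.exp (-u) - 1 := by
    have h0 : Real.exp (-u) = ∑' n : ℕ, ((n.factorial : ℝ))⁻¹ * (-u) ^ n := by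
      rw [Real.exp_eq_exp_ℝ, NormedSpace.exp_eq_tsum ℝ]
      simp [smul_eq_mul]
    rw [Summable.tsum_eq_zero_add hsum0] at h0
    simp only [Nat.factorial_zero, Nat.cast_one, inv_one, pow_zero, mul_one] at h0
    linarith
  simp only [NormedSpace.exp_eq_tsum ℝ]
  rw [Summable.tsum_eq_zero_add hs]
  simp only [pow_zero, Nat.factorial_zero, Nat.cast_one, inv_one, one_smul]
  rw [tsum_congr hterm, Summable.tsum_smul_const hsum1.neg, tsum_neg, hval]
  congr 1
  rw [neg_sub]

/-- Single-coordinate rate matrix (as a plain function). -/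
noncomputable def sRate (K : ℕ) [NeZero K] : Fin K → Fin K → ℝ := fun a b =>
  if a = b then (if a = maskTok K then 0 else -1) else if a = maskTok K then 1 else 0

/-- Tensor lift: apply `F j` on coordinates in `s`, identity elsewhere. -/
noncomputable def tens (K d : ℕ) [NeZero K] (F : Fin d → Fin K → Fin K → ℝ)
    (s : Finset (Fin d)) : Matrix (Fin d → Fin K) (Fin d → Fin K) ℝ := fun y y' =>
  ∏ j, if j ∈ s then F j (y j) (y' j) else if y j = y' j then 1 else 0

lemma sum_update {K d : ℕ} [NeZero K] (i : Fin d) (y : Fin d → Fin K)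
    (g : (Fin d → Fin K) → ℝ)
    (hg : ∀ z, z ≠ Function.update y i (z i) → g z = 0) :
    ∑ z, g z = ∑ c, g (Function.update y i c) := by
  classical
  have h1 : ∀ z : Fin d → Fin K, g z = ∑ c, if z = Function.update y i c then g z else 0 := by
    intro z
    by_cases hz : z = Function.update y i (z i)
    · rw [Finset.sum_eq_single (z i)]
      · rw [if_pos hz]
      · intro c _ hc
        rw [if_neg]
        intro h
        have hzi : z i = c := by rw [h, Function.update_self]
        exact hc hzi.symm
      · intro h; exact absurd (Finset.mem_univ _) h
    · rw [hg z hz, Finset.sum_eq_zero]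
      intro c _
      rw [if_neg]
      intro h
      apply hz
      have hc : z i = c := by rw [h, Function.update_self]
      rw [hc]; exact h
  calc ∑ z, g z = ∑ z, ∑ c, if z = Function.update y i c then g z else 0 :=
        Finset.sum_congr rfl fun z _ => h1 z
    _ = ∑ c, ∑ z : Fin d → Fin K, if z = Function.update y i c then g z else 0 :=
        Finset.sum_comm
    _ = ∑ c, g (Function.update y i c) := by
        refine Finset.sum_congr rfl fun c _ => ?_
        simp

lemma prod_delta {K d : ℕ} [NeZero K] (y y' : Fin d → Fin K) :
    (∏ j, if y j = y' j then (1 : ℝ) else 0) = if y = y' then 1 else 0 := by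
  by_cases h : y = y'
  · subst h; simp
  · rw [if_neg h]
    obtain ⟨j, hj⟩ := Function.ne_iff.mp h
    exact Finset.prod_eq_zero (Finset.mem_univ j) (if_neg hj)

lemma tens_singleton {K d : ℕ} [NeZero K] (F : Fin d → Fin K → Fin K → ℝ) (i : Fin d)
    (y y' : Fin d → Fin K) :
    tens K d F {i} y y' =
      F i (y i) (y' i) * ∏ j ∈ Finset.univ.erase i, (if y j = y' j then (1 : ℝ) else 0) := by
  rw [tens, ← Finset.mul_prod_erase Finset.univ _ (Finset.mem_univ i)]
  congr 1
  · simp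
  · refine Finset.prod_congr rfl fun j hj => ?_
    rw [if_neg (by simpa using (Finset.mem_erase.mp hj).1)]

lemma tens_vanish {K d : ℕ} [NeZero K] (F : Fin d → Fin K → Fin K → ℝ) (i : Fin d)
    {y z : Fin d → Fin K} (hz : z ≠ Function.update y i (z i)) :
    tens K d F {i} y z = 0 := by
  obtain ⟨j, hj⟩ := Function.ne_iff.mp hz
  have hji : j ≠ i := by rintro rfl; simp [Function.update_self] at hj
  have hyz : y j ≠ z j := fun h => hj (by rw [Function.update_of_ne hji, h])
  rw [tens_singleton]
  exact mul_eq_zero_of_right _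
    (Finset.prod_eq_zero (Finset.mem_erase.mpr ⟨hji, Finset.mem_univ j⟩) (if_neg hyz))

lemma tens_single_mul {K d : ℕ} [NeZero K] (F : Fin d → Fin K → Fin K → ℝ) (i : Fin d)
    (s : Finset (Fin d)) (hi : i ∉ s) :
    tens K d F {i} * tens K d F s = tens K d F (insert i s) := by
  classical
  ext y y'
  rw [Matrix.mul_apply]
  rw [sum_update i y (fun z => tens K d F {i} y z * tens K d F s z y')
    (fun z hz => by show tens K d F {i} y z * tens K d F s z y' = 0
                    rw [tens_vanish F i hz, zero_mul])]
  have hA : ∀ c, tens K d F {i} y (Function.update y i c) = F i (y i) c := by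
    intro c
    rw [tens_singleton, Function.update_self]
    rw [Finset.prod_eq_one fun j hj => by
      rw [Function.update_of_ne (Finset.mem_erase.mp hj).1, if_pos rfl], mul_one]
  have hB : ∀ c, tens K d F s (Function.update y i c) y' =
      (if c = y' i then 1 else 0) *
        ∏ j ∈ Finset.univ.erase i,
          (if j ∈ s then F j (y j) (y' j) else if y j = y' j then (1 : ℝ) else 0) := by
    intro c
    rw [tens, ← Finset.mul_prod_erase Finset.univ _ (Finset.mem_univ i)]
    congr 1
    · rw [if_neg hi, Function.update_self]
    · exact Finset.prod_congr rfl fun j hj => by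
        rw [Function.update_of_ne (Finset.mem_erase.mp hj).1]
  have hC : tens K d F (insert i s) y y' =
      F i (y i) (y' i) *
        ∏ j ∈ Finset.univ.erase i,
          (if j ∈ s then F j (y j) (y' j) else if y j = y' j then (1 : ℝ) else 0) := by
    rw [tens, ← Finset.mul_prod_erase Finset.univ _ (Finset.mem_univ i)]
    congr 1
    · rw [if_pos (Finset.mem_insert_self i s)]
    · refine Finset.prod_congr rfl fun j hj => ?_
      by_cases hjs : j ∈ s
      · rw [if_pos (Finset.mem_insert_of_mem hjs), if_pos hjs]
      · rw [if_neg (by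
          simp [Finset.mem_insert, (Finset.mem_erase.mp hj).1, hjs]), if_neg hjs]
  set P : ℝ := ∏ j ∈ Finset.univ.erase i,
      (if j ∈ s then F j (y j) (y' j) else if y j = y' j then (1 : ℝ) else 0) with hP
  simp only [hA, hB, hC, ← hP]
  have hstep : ∀ c : Fin K, F i (y i) c * ((if c = y' i then 1 else 0) * P) =
      if c = y' i then F i (y i) c * P else 0 := by
    intro c; split_ifs with h <;> simp
  rw [Finset.sum_congr rfl fun c _ => hstep c,
    Finset.sum_ite_eq' Finset.univ (y' i), if_pos (Finset.mem_univ _)]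

lemma tens_mul_single {K d : ℕ} [NeZero K] (F G : Fin d → Fin K → Fin K → ℝ) (i : Fin d) :
    tens K d F {i} * tens K d G {i} = tens K d (fun j a b => ∑ c, F j a c * G j c b) {i} := by
  classical
  ext y y'
  rw [Matrix.mul_apply]
  rw [sum_update i y (fun z => tens K d F {i} y z * tens K d G {i} z y')
    (fun z hz => by show tens K d F {i} y z * tens K d G {i} z y' = 0
                    rw [tens_vanish F i hz, zero_mul])]
  have hA : ∀ c, tens K d F {i} y (Function.update y i c) = F i (y i) c := by
    intro c
    rw [tens_singleton, Function.update_self]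
    rw [Finset.prod_eq_one fun j hj => by
      rw [Function.update_of_ne (Finset.mem_erase.mp hj).1, if_pos rfl], mul_one]
  have hB : ∀ c, tens K d G {i} (Function.update y i c) y' =
      G i c (y' i) * ∏ j ∈ Finset.univ.erase i, (if y j = y' j then (1 : ℝ) else 0) := by
    intro c
    rw [tens_singleton, Function.update_self]
    congr 1
    exact Finset.prod_congr rfl fun j hj => by
      rw [Function.update_of_ne (Finset.mem_erase.mp hj).1]
  simp only [hA, hB, tens_singleton]
  rw [Finset.sum_mul]
  exact Finset.sum_congr rfl fun c _ => (mul_assoc _ _ _).symm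

lemma sRate_sq (K : ℕ) [NeZero K] (a b : Fin K) :
    ∑ c, sRate K a c * sRate K c b = -sRate K a b := by
  classical
  by_cases ha : a = maskTok K
  · by_cases hb : b = maskTok K
    · subst ha; subst hb
      rw [Finset.sum_eq_zero, sRate]
      · simp
      · intro c _
        have h0 : sRate K c (maskTok K) = 0 := by
          unfold sRate; split_ifs <;> simp_all
        rw [h0, mul_zero]
    · subst ha
      rw [Finset.sum_eq_single b]
      · have h1 : sRate K (maskTok K) b = 1 := by
          rw [sRate, if_neg (fun h => hb h.symm), if_pos rfl]
        have h2 : sRate K b b = -1 := by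
          rw [sRate, if_pos rfl, if_neg hb]
        rw [h1, h2, one_mul]
      · intro c _ hc
        by_cases hcm : c = maskTok K
        · subst hcm
          rw [sRate, if_pos rfl, if_pos rfl, zero_mul]
        · rw [mul_eq_zero]; right
          rw [sRate, if_neg hc, if_neg hcm]
      · intro h; exact absurd (Finset.mem_univ _) h
  · rw [Finset.sum_eq_single a]
    · have h2 : sRate K a a = -1 := by rw [sRate, if_pos rfl, if_neg ha]
      rw [h2, neg_one_mul]
    · intro c _ hc
      rw [mul_eq_zero]; left
      rw [sRate, if_neg (fun h => hc h.symm), if_neg ha]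
    · intro h; exact absurd (Finset.mem_univ _) h

/-- The lift of the single-coordinate rate matrix to coordinate `i`. -/
noncomputable def Li (K d : ℕ) [NeZero K] (i : Fin d) :
    Matrix (Fin d → Fin K) (Fin d → Fin K) ℝ :=
  tens K d (fun _ => sRate K) {i}

lemma Li_sq (K d : ℕ) [NeZero K] (i : Fin d) : Li K d i * Li K d i = -Li K d i := by
  rw [Li, tens_mul_single]
  ext y y'
  rw [Matrix.neg_apply, tens_singleton, tens_singleton, sRate_sq, neg_mul]

lemma commute_Li (K d : ℕ) [NeZero K] {i j : Fin d} (hij : i ≠ j) :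
    Commute (Li K d i) (Li K d j) := by
  show Li K d i * Li K d j = Li K d j * Li K d i
  unfold Li
  rw [tens_single_mul _ i {j} (by simp [hij]),
    tens_single_mul _ j {i} (by simp [hij.symm]),
    show (insert i ({j} : Finset (Fin d))) = insert j {i} from Finset.pair_comm i j]

lemma mKer_eq (K : ℕ) [NeZero K] (u : ℝ) (a b : Fin K) :
    mKer K u a b = (if a = b then 1 else 0) + (1 - Real.exp (-u)) * sRate K a b := by
  by_cases hab : a = b
  · subst hab
    by_cases ha : a = maskTok K
    · simp [mKer, sRate, ha]
    · simp only [mKer, sRate, ha, and_self, if_false, if_true, if_pos rfl]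
      ring
  · by_cases ha : a = maskTok K
    · have hb : ¬b = maskTok K := fun h => hab (ha.trans h.symm)
      have h1 : mKer K u a b = 1 - Real.exp (-u) := by
        rw [mKer, if_neg (fun hc => hb hc.2), if_neg hab, if_pos ha]
      have h2 : sRate K a b = 1 := by
        rw [sRate, if_neg hab, if_pos ha]
      rw [h1, h2, if_neg hab]
      ring
    · have h1 : mKer K u a b = 0 := by
        rw [mKer, if_neg (fun hc => ha hc.1), if_neg hab, if_neg ha]
      have h2 : sRate K a b = 0 := by
        rw [sRate, if_neg hab, if_neg ha]
      rw [h1, h2, if_neg hab]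
      ring

lemma one_add_smul_Li (K d : ℕ) [NeZero K] (u : ℝ) (i : Fin d) :
    (1 : Matrix (Fin d → Fin K) (Fin d → Fin K) ℝ) + (1 - Real.exp (-u)) • Li K d i =
      tens K d (fun _ => mKer K u) {i} := by
  ext y y'
  rw [Matrix.add_apply, Matrix.smul_apply, Matrix.one_apply, ← prod_delta y y',
    ← Finset.mul_prod_erase Finset.univ _ (Finset.mem_univ i), Li, tens_singleton,
    tens_singleton, mKer_eq, smul_eq_mul, ← mul_assoc, ← add_mul]

lemma fwdRate_eq_sum (K d : ℕ) [NeZero K] : fwdRate K d = ∑ i, Li K d i := by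
  classical
  ext y y'
  rw [Matrix.sum_apply]
  simp only [Li, tens_singleton]
  by_cases h : y = y'
  · subst h
    rw [fwdRate, if_pos rfl]
    have hterm : ∀ i : Fin d, sRate K (y i) (y i) *
        (∏ j ∈ Finset.univ.erase i, if y j = y j then (1 : ℝ) else 0) =
        (if y i = maskTok K then (1 : ℝ) else 0) - 1 := by
      intro i
      rw [Finset.prod_eq_one fun j _ => if_pos rfl, mul_one, sRate, if_pos rfl]
      split_ifs <;> ring
    rw [Finset.sum_congr rfl fun i _ => hterm i, Finset.sum_sub_distrib, Finset.sum_boole]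
    simp only [numK, Finset.sum_const, Finset.card_univ, Fintype.card_fin, nsmul_eq_mul, mul_one]
    ring
  · rw [fwdRate, if_neg h]
    obtain ⟨i0, hi0⟩ := Function.ne_iff.mp h
    by_cases hham : ham y y' = 1
    · obtain ⟨a, hPa⟩ := Finset.card_eq_one.mp (show (Finset.univ.filter fun i => y i ≠ y' i).card = 1 from hham)
      have hmem : ∀ i : Fin d, y i ≠ y' i ↔ i = a := by
        intro i
        rw [← Finset.mem_singleton, ← hPa]
        simp [ham]
      have hya : y a ≠ y' a := (hmem a).mpr rfl
      rw [Finset.sum_eq_single a]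
      · have hprod : (∏ j ∈ Finset.univ.erase a, if y j = y' j then (1 : ℝ) else 0) = 1 := by
          refine Finset.prod_eq_one fun j hj => ?_
          have : y j = y' j := by
            by_contra hc
            exact (Finset.mem_erase.mp hj).1 ((hmem j).mp hc)
          rw [if_pos this]
        rw [hprod, mul_one]
        by_cases hm : y a = maskTok K
        · rw [if_pos ⟨hham, fun i hi => by rw [(hmem i).mp hi]; exact hm⟩,
            sRate, if_neg hya, if_pos hm]
        · rw [if_neg (fun hc => hm (hc.2 a hya)), sRate, if_neg hya, if_neg hm]
      · intro i _ hia
        rw [mul_eq_zero]; right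
        exact Finset.prod_eq_zero
          (Finset.mem_erase.mpr ⟨fun hc => hia (hc ▸ rfl) , Finset.mem_univ a⟩) (if_neg hya)
      · intro hcon; exact absurd (Finset.mem_univ _) hcon
    · rw [if_neg (fun hc => hham hc.1), Finset.sum_eq_zero]
      intro i _
      have h2 : 1 < (Finset.univ.filter fun j => y j ≠ y' j).card := by
        rcases Nat.lt_or_ge (Finset.univ.filter fun j => y j ≠ y' j).card 2 with hlt | hge
        · interval_cases hc : (Finset.univ.filter fun j => y j ≠ y' j).card
          · exfalso
            have := Finset.card_eq_zero.mp hc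
            have : i0 ∈ (Finset.univ.filter fun j => y j ≠ y' j) := by simp [hi0]
            simp_all
          · exact absurd hc hham
        · exact hge
      obtain ⟨a, ha, b, hb, hab⟩ := Finset.one_lt_card.mp h2
      have hya : y a ≠ y' a := (Finset.mem_filter.mp ha).2
      have hyb : y b ≠ y' b := (Finset.mem_filter.mp hb).2
      rw [mul_eq_zero]; right
      rcases ne_or_eq a i with hai | rfl
      · exact Finset.prod_eq_zero (Finset.mem_erase.mpr ⟨hai, Finset.mem_univ a⟩) (if_neg hya)
      · exact Finset.prod_eq_zero (Finset.mem_erase.mpr ⟨(fun hc => hab hc.symm), Finset.mem_univ b⟩) (if_neg hyb)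

lemma exp_Li (K d : ℕ) [NeZero K] (u : ℝ) (i : Fin d) :
    NormedSpace.exp (u • Li K d i) = tens K d (fun _ => mKer K u) {i} := by
  letI : SeminormedRing (Matrix (Fin d → Fin K) (Fin d → Fin K) ℝ) :=
    Matrix.linftyOpSemiNormedRing
  letI : NormedRing (Matrix (Fin d → Fin K) (Fin d → Fin K) ℝ) :=
    Matrix.linftyOpNormedRing
  letI : NormedAlgebra ℝ (Matrix (Fin d → Fin K) (Fin d → Fin K) ℝ) :=
    Matrix.linftyOpNormedAlgebra
  rw [← one_add_smul_Li]
  exact exp_of_sq_neg _ (Li_sq K d i) u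

lemma exp_sum_Li (K d : ℕ) [NeZero K] (u : ℝ) (s : Finset (Fin d)) :
    NormedSpace.exp (∑ i ∈ s, u • Li K d i) = tens K d (fun _ => mKer K u) s := by
  classical
  induction s using Finset.induction_on with
  | empty =>
    rw [Finset.sum_empty, NormedSpace.exp_zero]
    ext y y'
    rw [tens]
    simp only [Finset.notMem_empty, if_false]
    rw [prod_delta, Matrix.one_apply]
  | insert i s hi ih =>
    have hcomm : Commute (u • Li K d i) (∑ j ∈ s, u • Li K d j) := by
      refine Commute.sum_right s _ _ fun j hj => ?_
      have hij : i ≠ j := fun hc => hi (hc ▸ hj)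
      exact ((commute_Li K d hij).smul_left u).smul_right u
    rw [Finset.sum_insert hi, Matrix.exp_add_of_commute _ _ hcomm, ih, exp_Li,
      tens_single_mul _ i s hi]

/-- The forward transition kernel of masked discrete diffusion factorizes over
coordinates: `exp(uR)(y,y') = ∏ i, m_u(y_i, y'_i)`. -/
theorem forward_kernel_factorizes (K d : ℕ) [NeZero K] (hK : 2 ≤ K) (hd : 1 ≤ d)
    (u : ℝ) (hu : 0 ≤ u) (y y' : Fin d → Fin K) :
    NormedSpace.exp (u • fwdRate K d) y y' = ∏ i, mKer K u (y i) (y' i) := by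
  have h1 : u • fwdRate K d = ∑ i : Fin d, u • Li K d i := by
    rw [fwdRate_eq_sum, Finset.smul_sum]
  rw [h1, exp_sum_Li]
  rw [tens]
  exact Finset.prod_congr rfl fun j _ => if_pos (Finset.mem_univ j)
end

section
/- For every t ≥ 0, the matrix exponential exp(tA) is given entrywise by: exp(tA)(b,b) = e^{−t} for every b ≠ K; exp(tA)(K,b) = 1 − e^{−t} for every b ≠ K; exp(tA)(K,K) = 1; and all other entries equal 0. -/
open Matrix Finset

/-- The single-token rate matrix `A`: `A(K,b) = 1` and `A(b,b) = -1` for every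
non-mask token `b`, and all other entries (including `A(K,K)`) are `0`. -/
noncomputable def tokA (K : ℕ) [NeZero K] : Matrix (Fin K) (Fin K) ℝ := fun a b =>
  if a = maskTok K ∧ b ≠ maskTok K then 1
  else if a = b ∧ b ≠ maskTok K then -1
  else 0

open Nat in
/-- Exponential of a scalar multiple of an idempotent matrix. -/
lemma exp_smul_idem {n : ℕ} (P : Matrix (Fin n) (Fin n) ℝ) (h : P * P = P) (s : ℝ) :
    NormedSpace.exp (s • P) = 1 + (Real.exp s - 1) • P := by
  letI : SeminormedRing (Matrix (Fin n) (Fin n) ℝ) := Matrix.linftyOpSemiNormedRing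
  letI : NormedRing (Matrix (Fin n) (Fin n) ℝ) := Matrix.linftyOpNormedRing
  letI : NormedAlgebra ℝ (Matrix (Fin n) (Fin n) ℝ) := Matrix.linftyOpNormedAlgebra
  have hpow : ∀ k : ℕ, P ^ (k + 1) = P := by
    intro k
    induction k with
    | zero => simp
    | succ k ih => rw [pow_succ, ih, h]
  have hsum : Summable fun k : ℕ => ((k ! : ℝ))⁻¹ • (s • P) ^ k :=
    NormedSpace.expSeries_summable' (s • P)
  rw [NormedSpace.exp_eq_tsum ℝ]
  beta_reduce
  rw [Summable.tsum_eq_zero_add hsum]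
  have h1 : ∀ k : ℕ, (((k+1)! : ℝ))⁻¹ • (s • P) ^ (k+1)
      = (s ^ (k+1) / (k+1)!) • P := by
    intro k
    rw [smul_pow, hpow, smul_smul, div_eq_inv_mul]
  simp only [h1]
  have hc : Summable fun k : ℕ => s ^ (k+1) / ((k+1)! : ℝ) :=
    ((Real.summable_pow_div_factorial s).comp_injective (add_left_injective 1))
  rw [Summable.tsum_smul_const hc]
  have he : ∑' k : ℕ, s ^ (k+1) / ((k+1)! : ℝ) = Real.exp s - 1 := by
    have h2 : Real.exp s = ∑' k : ℕ, s ^ k / (k ! : ℝ) := by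
      rw [Real.exp_eq_exp_ℝ, NormedSpace.exp_eq_tsum ℝ]
      simp [div_eq_inv_mul]
    have h3 : Summable fun k : ℕ => s ^ k / (k ! : ℝ) :=
      Real.summable_pow_div_factorial s
    rw [h2, Summable.tsum_eq_zero_add h3]
    simp
  rw [he]
  simp [pow_zero]

/-- The rank-one "mask row" matrix. -/
noncomputable def maskB (K : ℕ) [NeZero K] : Matrix (Fin K) (Fin K) ℝ := fun a _ =>
  if a = maskTok K then 1 else 0

lemma maskB_idem (K : ℕ) [NeZero K] : maskB K * maskB K = maskB K := by
  ext a b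
  simp only [Matrix.mul_apply, maskB]
  by_cases ha : a = maskTok K
  · simp [ha, Finset.sum_ite_eq']
  · simp [ha]

lemma tokA_eq (K : ℕ) [NeZero K] : tokA K = maskB K - 1 := by
  ext a b
  simp only [tokA, maskB, Matrix.sub_apply, Matrix.one_apply]
  by_cases ha : a = maskTok K <;> by_cases hb : b = maskTok K <;>
    by_cases hab : a = b <;> simp_all

lemma exp_tokA (K : ℕ) [NeZero K] (t : ℝ) :
    NormedSpace.exp (t • tokA K)
      = Real.exp (-t) • 1 + (1 - Real.exp (-t)) • maskB K := by
  have hsplit : t • tokA K = (-t) • (1 : Matrix (Fin K) (Fin K) ℝ) + t • maskB K := by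
    rw [tokA_eq, smul_sub, neg_smul]
    abel
  have hcomm : Commute ((-t) • (1 : Matrix (Fin K) (Fin K) ℝ)) (t • maskB K) :=
    ((Commute.one_left (maskB K)).smul_left _).smul_right _
  rw [hsplit, Matrix.exp_add_of_commute _ _ hcomm,
    exp_smul_idem 1 (by simp) (-t), exp_smul_idem (maskB K) (maskB_idem K) t]
  have h1 : (1 : Matrix (Fin K) (Fin K) ℝ) + (Real.exp (-t) - 1) • 1
      = Real.exp (-t) • 1 := by
    rw [sub_smul, one_smul]; abel
  rw [h1, mul_add, mul_one, smul_mul_assoc, Matrix.one_mul, smul_smul]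
  congr 2
  rw [mul_sub, mul_one, ← Real.exp_add]
  simp

/-- The explicit form of the matrix exponential `exp(tA)` for `t ≥ 0`:
`exp(tA)(b,b) = e^{-t}` and `exp(tA)(K,b) = 1 - e^{-t}` for `b ≠ K`,
`exp(tA)(K,K) = 1`, and all other entries vanish. -/
theorem exp_tokA_entries (K : ℕ) [NeZero K] (hK : 2 ≤ K) (t : ℝ) (ht : 0 ≤ t) :
    (∀ b : Fin K, b ≠ maskTok K →
      NormedSpace.exp (t • tokA K) b b = Real.exp (-t)) ∧
    (∀ b : Fin K, b ≠ maskTok K →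
      NormedSpace.exp (t • tokA K) (maskTok K) b = 1 - Real.exp (-t)) ∧
    NormedSpace.exp (t • tokA K) (maskTok K) (maskTok K) = 1 ∧
    (∀ a b : Fin K, a ≠ b → a ≠ maskTok K →
      NormedSpace.exp (t • tokA K) a b = 0) := by
  rw [exp_tokA K t]
  refine ⟨fun b hb => ?_, fun b hb => ?_, ?_, fun a b hab ha => ?_⟩
  · simp [Matrix.add_apply, Matrix.smul_apply, Matrix.one_apply, maskB, hb]
  · simp [Matrix.add_apply, Matrix.smul_apply, Matrix.one_apply, maskB, Ne.symm hb]
  · simp [Matrix.add_apply, Matrix.smul_apply, Matrix.one_apply, maskB]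
  · simp [Matrix.add_apply, Matrix.smul_apply, Matrix.one_apply, maskB, hab, ha]
end

section
/- Under Assumption [A2], for every t ≥ 0 and every integer k with 0 ≤ k ≤ d, the number of mask tokens at forward time t is Binomial(d, 1 − e^{−t}) distributed: ∑_{y ∈ Y : numK(y) = k} q_t(y) = C(d,k) · (1 − e^{−t})^k · e^{−t(d−k)}, where C(d,k) is the binomial coefficient. -/
open Matrix Finset

namespace MaskedAux

open NormedSpace

theorem exp_smul_idem' {A : Type*} [NormedRing A] [NormedAlgebra ℝ A] [CompleteSpace A]
    (t : ℝ) (P : A) (hP : P * P = P) :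
    exp (t • P) = 1 + (Real.exp t - 1) • P := by
  have hPpow : ∀ n : ℕ, P ^ (n + 1) = P := by
    intro n
    induction n with
    | zero => simp
    | succ n ih => rw [pow_succ, ih, hP]
  have hpow : ∀ n : ℕ, (t • P) ^ (n + 1) = t ^ (n + 1) • P := by
    intro n; rw [smul_pow, hPpow]
  have hsum : Summable fun n : ℕ => (t ^ (n + 1) / (n + 1).factorial : ℝ) := by
    have := Real.summable_pow_div_factorial t
    exact (summable_nat_add_iff 1).mpr this |>.congr (fun n => rfl) |>.congr (fun n => rfl)
  rw [exp_eq_tsum ℝ]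
  beta_reduce
  rw [Summable.tsum_eq_zero_add (expSeries_summable' (𝕂 := ℝ) (t • P))]
  simp only [pow_zero, Nat.factorial_zero, Nat.cast_one, inv_one, one_smul]
  congr 1
  have : ∀ n : ℕ, ((((n+1).factorial : ℝ))⁻¹ • (t • P) ^ (n+1)) =
      (t ^ (n+1) / (n+1).factorial) • P := by
    intro n
    rw [hpow, smul_smul, div_eq_inv_mul]
  rw [tsum_congr this, Summable.tsum_smul_const hsum]
  congr 1
  have hexp : Real.exp t = ∑' n : ℕ, t ^ n / n.factorial := by
    rw [Real.exp_eq_exp_ℝ, exp_eq_tsum ℝ]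
    exact tsum_congr fun n => by rw [smul_eq_mul, div_eq_inv_mul]
  have hsum0 : Summable fun n : ℕ => (t ^ n / n.factorial : ℝ) :=
    Real.summable_pow_div_factorial t
  rw [hexp, Summable.tsum_eq_zero_add hsum0]
  simp

variable (K d : ℕ) [NeZero K]

/-- single-coordinate masking matrix -/
def Mi (i : Fin d) : Matrix (Fin d → Fin K) (Fin d → Fin K) ℝ := fun y y' =>
  if y = Function.update y' i (maskTok K) then 1 else 0

/-- multi-coordinate masking matrix -/
def NA (A : Finset (Fin d)) : Matrix (Fin d → Fin K) (Fin d → Fin K) ℝ := fun y y' =>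
  if (∀ j, j ∉ A → y j = y' j) ∧ (∀ j ∈ A, y j = maskTok K) then 1 else 0

theorem NA_empty : NA K d ∅ = 1 := by
  funext y y'
  simp only [NA, Finset.notMem_empty, Matrix.one_apply]
  congr 1
  simp [funext_iff]

theorem Mi_mul_NA (i : Fin d) (A : Finset (Fin d)) (hi : i ∉ A) :
    Mi K d i * NA K d A = NA K d (insert i A) := by
  funext y y'
  rw [Matrix.mul_apply]
  rw [Finset.sum_eq_single (Function.update y i (y' i))]
  · simp only [Mi, NA]
    by_cases h1 : y i = maskTok K
    · have hy : y = Function.update (Function.update y i (y' i)) i (maskTok K) := by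
        funext j
        rcases eq_or_ne j i with rfl | hji
        · simp [h1]
        · simp [Function.update_of_ne hji]
      rw [if_pos hy, one_mul]
      congr 1
      apply propext
      constructor
      · intro ⟨ha, hb⟩
        constructor
        · intro j hj
          have hji : j ≠ i := by rintro rfl; exact hj (Finset.mem_insert_self ..)
          have := ha j (fun h => hj (Finset.mem_insert_of_mem h))
          rwa [Function.update_of_ne hji] at this
        · intro j hj
          rcases Finset.mem_insert.mp hj with rfl | hj'
          · exact h1
          · have hji : j ≠ i := by rintro rfl; exact hi hj'
            have := hb j hj'
            rwa [Function.update_of_ne hji] at this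
      · intro ⟨ha, hb⟩
        constructor
        · intro j hj
          rcases eq_or_ne j i with rfl | hji
          · simp
          · rw [Function.update_of_ne hji]
            exact ha j (by simp [hji, hj])
        · intro j hj
          have hji : j ≠ i := by rintro rfl; exact hi hj
          rw [Function.update_of_ne hji]
          exact hb j (Finset.mem_insert_of_mem hj)
    · have h3 : ¬ y = Function.update (Function.update y i (y' i)) i (maskTok K) := by
        intro h
        apply h1
        rw [h]
        simp
      rw [if_neg h3, zero_mul, if_neg]
      intro ⟨_, hb⟩
      exact h1 (hb i (Finset.mem_insert_self i A))
  · intro z _ hz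
    simp only [Mi, NA]
    by_cases h3 : y = Function.update z i (maskTok K)
    · rw [if_pos h3, one_mul, if_neg]
      intro ⟨ha, hb⟩
      apply hz
      funext j
      rcases eq_or_ne j i with rfl | hji
      · rw [Function.update_self]
        exact ha _ hi
      · rw [Function.update_of_ne hji]
        have := congrFun h3 j
        rw [Function.update_of_ne hji] at this
        exact this.symm
    · rw [if_neg h3, zero_mul]
  · intro h
    exact absurd (Finset.mem_univ _) h

theorem Mi_eq_NA (i : Fin d) : Mi K d i = NA K d {i} := by
  funext y y'
  simp only [Mi, NA, Finset.mem_singleton]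
  congr 1
  apply propext
  constructor
  · rintro rfl
    constructor
    · intro j hj
      rw [Function.update_of_ne hj]
    · rintro j rfl
      simp
  · intro ⟨ha, hb⟩
    funext j
    rcases eq_or_ne j i with rfl | hji
    · rw [Function.update_self]; exact hb j rfl
    · rw [Function.update_of_ne hji]; exact ha j hji

theorem Mi_idem (i : Fin d) : Mi K d i * Mi K d i = Mi K d i := by
  have h1 : Mi K d i * NA K d {i} = Mi K d i := by
    funext y y'
    rw [Matrix.mul_apply]
    rw [Finset.sum_eq_single (Function.update y' i (maskTok K))]
    · rw [← Mi_eq_NA]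
      simp only [Mi]
      rw [Function.update_idem]
      by_cases h : y = Function.update y' i (maskTok K)
      · simp [h]
      · simp [h]
    · intro z _ hz
      rw [← Mi_eq_NA]
      simp only [Mi]
      rw [if_neg (Ne.symm hz ∘ Eq.symm), mul_zero]
    · intro h; exact absurd (Finset.mem_univ _) h
  calc Mi K d i * Mi K d i = Mi K d i * NA K d {i} := by rw [← Mi_eq_NA]
  _ = Mi K d i := h1

theorem Mi_commute (i j : Fin d) : Commute (Mi K d i) (Mi K d j) := by
  rcases eq_or_ne i j with rfl | hij
  · exact Commute.refl _
  · have h1 : Mi K d i * Mi K d j = NA K d (insert i {j}) := by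
      rw [Mi_eq_NA K d j, Mi_mul_NA K d i {j} (by simp [hij])]
    have h2 : Mi K d j * Mi K d i = NA K d (insert j {i}) := by
      rw [Mi_eq_NA K d i, Mi_mul_NA K d j {i} (by simp [hij.symm])]
    unfold Commute SemiconjBy
    rw [h1, h2, Finset.pair_comm]

theorem matrix_exp_smul_idem {n : Type*} [Fintype n] [DecidableEq n] (t : ℝ)
    (P : Matrix n n ℝ) (hP : P * P = P) :
    exp (t • P) = 1 + (Real.exp t - 1) • P := by
  letI : SeminormedRing (Matrix n n ℝ) := Matrix.linftyOpSemiNormedRing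
  letI : NormedRing (Matrix n n ℝ) := Matrix.linftyOpNormedRing
  letI : NormedAlgebra ℝ (Matrix n n ℝ) := Matrix.linftyOpNormedAlgebra
  exact exp_smul_idem' t P hP

theorem exp_sum_Mi (t : ℝ) (s : Finset (Fin d)) :
    exp (∑ i ∈ s, t • Mi K d i) =
      ∑ A ∈ s.powerset, (Real.exp t - 1) ^ A.card • NA K d A := by
  induction s using Finset.induction_on with
  | empty => simp [NA_empty, exp_zero]
  | insert i s hi ih =>
    rw [Finset.sum_insert hi]
    rw [Matrix.exp_add_of_commute _ _
      (Commute.sum_right s _ _ fun j _ => ((Mi_commute K d i j).smul_left t).smul_right t)]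
    rw [ih, matrix_exp_smul_idem t _ (Mi_idem K d i)]
    rw [add_mul, one_mul, Finset.sum_powerset_insert hi]
    congr 1
    rw [smul_mul_assoc, Finset.mul_sum]
    rw [Finset.smul_sum]
    apply Finset.sum_congr rfl
    intro A hA
    have hiA : i ∉ A := fun h => hi (Finset.mem_powerset.mp hA h)
    rw [mul_smul_comm, Mi_mul_NA K d i A hiA, smul_smul,
      Finset.card_insert_of_notMem hiA, pow_succ, mul_comm]

theorem fwdRate_eq : fwdRate K d = (∑ i, Mi K d i) - (d : ℝ) • 1 := by
  funext y y'
  simp only [fwdRate, Matrix.sub_apply, Matrix.sum_apply, Matrix.smul_apply, Matrix.one_apply,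
    smul_eq_mul]
  by_cases h : y = y'
  · subst h
    rw [if_pos rfl, if_pos rfl, mul_one]
    have : ∀ i : Fin d, Mi K d i y y = if y i = maskTok K then (1 : ℝ) else 0 := by
      intro i
      simp only [Mi]
      congr 1
      apply propext
      constructor
      · intro hy
        have := congrFun hy i
        rwa [Function.update_self] at this
      · intro hy
        funext j
        rcases eq_or_ne j i with rfl | hji
        · rw [Function.update_self]; exact hy
        · rw [Function.update_of_ne hji]
    rw [Finset.sum_congr rfl fun i _ => this i, Finset.sum_boole]
    rw [show (Finset.univ.filter fun i => y i = maskTok K).card = numK K d y from rfl]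
    ring
  · rw [if_neg h, if_neg h, mul_zero, sub_zero]
    by_cases hc : ham y y' = 1 ∧ ∀ i, y i ≠ y' i → y i = maskTok K
    · rw [if_pos hc]
      obtain ⟨i0, hi0⟩ := Finset.card_eq_one.mp hc.1
      have hi0mem : i0 ∈ Finset.univ.filter fun j => y j ≠ y' j := by
        rw [hi0]; exact Finset.mem_singleton_self i0
      have hdiff : y i0 ≠ y' i0 := (Finset.mem_filter.mp hi0mem).2
      rw [Finset.sum_eq_single i0]
      · simp only [Mi]
        rw [if_pos]
        funext j
        rcases eq_or_ne j i0 with rfl | hji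
        · rw [Function.update_self]
          exact hc.2 j hdiff
        · rw [Function.update_of_ne hji]
          by_contra hne
          have : j ∈ Finset.univ.filter fun j => y j ≠ y' j := by
            simp [hne]
          rw [hi0] at this
          exact hji (Finset.mem_singleton.mp this)
      · intro i _ hii0
        simp only [Mi]
        rw [if_neg]
        intro hy
        apply hdiff
        have := congrFun hy i0
        rwa [Function.update_of_ne (Ne.symm hii0)] at this
      · intro hmem; exact absurd (Finset.mem_univ _) hmem
    · rw [if_neg hc]
      symm
      apply Finset.sum_eq_zero
      intro i _
      simp only [Mi]
      rw [if_neg]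
      intro hy
      apply hc
      have hsub : (Finset.univ.filter fun j => y j ≠ y' j) = {i} := by
        apply Finset.Subset.antisymm
        · intro j hj
          have hj' := (Finset.mem_filter.mp hj).2
          rw [Finset.mem_singleton]
          by_contra hji
          apply hj'
          rw [hy, Function.update_of_ne hji]
        · intro j hj
          rw [Finset.mem_singleton] at hj
          subst hj
          simp only [Finset.mem_filter, Finset.mem_univ, true_and]
          intro heq
          apply h
          funext l
          rcases eq_or_ne l j with rfl | hlj
          · exact heq
          · rw [hy, Function.update_of_ne hlj]
      constructor
      · rw [ham, hsub, Finset.card_singleton]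
      · intro j hj
        have : j ∈ Finset.univ.filter fun l => y l ≠ y' l := by simp [hj]
        rw [hsub, Finset.mem_singleton] at this
        subst this
        rw [hy, Function.update_self]

theorem exp_t_fwdRate (t : ℝ) :
    exp (t • fwdRate K d) = Real.exp (-(t * d)) •
      ∑ A ∈ (Finset.univ : Finset (Fin d)).powerset,
        (Real.exp t - 1) ^ A.card • NA K d A := by
  have hdecomp : t • fwdRate K d = (∑ i, t • Mi K d i) + (-(t * d)) • (1 :
      Matrix (Fin d → Fin K) (Fin d → Fin K) ℝ) := by
    rw [fwdRate_eq, smul_sub, Finset.smul_sum]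
    congr 1
    rw [smul_smul, neg_smul, ← sub_eq_add_neg]
  rw [hdecomp, Matrix.exp_add_of_commute _ _
    (Commute.sum_left _ _ _ fun j _ => ((Commute.one_right (Mi K d j)).smul_left t).smul_right _)]
  rw [exp_sum_Mi, matrix_exp_smul_idem _ _ (one_mul 1)]
  rw [mul_add, mul_one, mul_smul_comm, mul_one]
  nth_rewrite 1 [← one_smul ℝ (∑ A ∈ (Finset.univ : Finset (Fin d)).powerset,
      (Real.exp t - 1) ^ A.card • NA K d A)]
  rw [← add_smul]
  norm_num

end MaskedAux

open MaskedAux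

/-- Under Assumption [A2], the number of mask tokens at forward time `t` follows a
Binomial(d, 1 - e^{-t}) distribution. -/
theorem numK_binomial (K d : ℕ) [NeZero K] (hK : 2 ≤ K) (hd : 1 ≤ d)
    (q0 : (Fin d → Fin K) → ℝ)
    (hq0nonneg : ∀ y, 0 ≤ q0 y) (hq0sum : ∑ y, q0 y = 1)
    (hA2 : ∀ y, 0 < q0 y ↔ numK K d y = 0)
    (t : ℝ) (ht : 0 ≤ t) (k : ℕ) (hk : k ≤ d) :
    ∑ y ∈ Finset.univ.filter (fun y : Fin d → Fin K => numK K d y = k),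
        qt K d q0 t y
      = (d.choose k : ℝ) * (1 - Real.exp (-t)) ^ k
          * Real.exp (-t * ((d : ℝ) - (k : ℝ))) := by
  classical
  have hq0zero : ∀ y, numK K d y ≠ 0 → q0 y = 0 := fun y h =>
    le_antisymm (not_lt.mp fun hlt => h ((hA2 y).mp hlt)) (hq0nonneg y)
  set c : ℝ := Real.exp t - 1 with hc
  set F : Finset (Fin d → Fin K) :=
    Finset.univ.filter (fun y : Fin d → Fin K => numK K d y = k) with hF
  -- pointwise formula for qt
  have hqt : ∀ y, qt K d q0 t y = Real.exp (-(t * d)) *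
      ∑ A ∈ (Finset.univ : Finset (Fin d)).powerset,
        c ^ A.card * ∑ y', NA K d A y y' * q0 y' := by
    intro y
    rw [qt, exp_t_fwdRate]
    simp only [Matrix.mulVec, dotProduct, Matrix.smul_apply, Matrix.sum_apply,
      Pi.smul_apply, smul_eq_mul]
    conv_rhs => simp only [Finset.mul_sum]
    simp only [Finset.sum_mul, Finset.mul_sum]
    rw [Finset.sum_comm]
    apply Finset.sum_congr rfl
    intro A _
    apply Finset.sum_congr rfl
    intro y' _
    rw [hc]
    ring
  -- the key inner computation
  have key : ∀ A : Finset (Fin d),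
      (∑ y ∈ F, ∑ y', NA K d A y y' * q0 y') = if A.card = k then 1 else 0 := by
    intro A
    rw [Finset.sum_comm]
    have h1 : ∀ y', (∑ y ∈ F, NA K d A y y' * q0 y')
        = (if A.card = k then 1 else 0) * q0 y' := by
      intro y'
      by_cases h0 : numK K d y' = 0
      · have hy'ne : ∀ j, y' j ≠ maskTok K := by
          intro j hj
          have hmem : j ∈ Finset.univ.filter (fun i => y' i = maskTok K) := by simp [hj]
          rw [numK, Finset.card_eq_zero] at h0
          rw [h0] at hmem
          exact absurd hmem (Finset.notMem_empty _)
        set yA : Fin d → Fin K := fun j => if j ∈ A then maskTok K else y' j with hyA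
        have hNA : ∀ y, NA K d A y y' = if y = yA then (1:ℝ) else 0 := by
          intro y
          simp only [NA]
          congr 1
          apply propext
          constructor
          · intro ⟨ha, hb⟩
            funext j
            by_cases hj : j ∈ A
            · rw [hyA]; simpa [hj] using hb j hj
            · rw [hyA]; simpa [hj] using ha j hj
          · rintro rfl
            constructor
            · intro j hj; simp [hyA, hj]
            · intro j hj; simp [hyA, hj]
        have hnum : numK K d yA = A.card := by
          rw [numK]
          congr 1
          ext j
          by_cases hj : j ∈ A <;> simp [hyA, hj, hy'ne j]
        rw [Finset.sum_congr rfl fun y _ => by rw [hNA y]]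
        rw [← Finset.sum_mul]
        congr 1
        rw [Finset.sum_ite_eq' F yA (fun _ => (1:ℝ))]
        have : yA ∈ F ↔ A.card = k := by
          rw [hF, Finset.mem_filter, hnum]
          simp
        by_cases hm : A.card = k
        · rw [if_pos (this.mpr hm), if_pos hm]
        · rw [if_neg (fun h => hm (this.mp h)), if_neg hm]
      · rw [hq0zero y' h0, mul_zero]
        apply Finset.sum_eq_zero
        intro y _
        rw [mul_zero]
    rw [Finset.sum_congr rfl fun y' _ => h1 y']
    rw [← Finset.mul_sum, hq0sum, mul_one]
  -- put it together
  calc ∑ y ∈ F, qt K d q0 t y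
      = Real.exp (-(t * d)) * ∑ A ∈ (Finset.univ : Finset (Fin d)).powerset,
          c ^ A.card * (∑ y ∈ F, ∑ y', NA K d A y y' * q0 y') := by
        rw [Finset.sum_congr rfl fun y _ => hqt y, ← Finset.mul_sum]
        congr 1
        rw [Finset.sum_comm]
        exact Finset.sum_congr rfl fun A _ => by rw [← Finset.mul_sum]
    _ = Real.exp (-(t * d)) * ((d.choose k : ℝ) * c ^ k) := by
        congr 1
        rw [Finset.sum_congr rfl fun A _ => by rw [key A, mul_ite, mul_one, mul_zero]]
        rw [← Finset.sum_filter, ← Finset.powersetCard_eq_filter]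
        rw [Finset.sum_congr rfl fun A hA => by
          rw [(Finset.mem_powersetCard.mp hA).2]]
        rw [Finset.sum_const, Finset.card_powersetCard, Finset.card_univ, Fintype.card_fin,
          nsmul_eq_mul]
    _ = (d.choose k : ℝ) * (1 - Real.exp (-t)) ^ k * Real.exp (-t * ((d:ℝ) - (k:ℝ))) := by
        have e1 : (1 - Real.exp (-t)) = Real.exp (-t) * c := by
          rw [hc, mul_sub, ← Real.exp_add, mul_one, neg_add_cancel, Real.exp_zero]
        have e2 : -(t * (d:ℝ)) = (k:ℝ) * -t + -t * ((d:ℝ) - (k:ℝ)) := by ring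
        rw [e1, mul_pow, ← Real.exp_nat_mul, e2, Real.exp_add]
        ring
end

section
/- Under Assumption [A2], for every δ ≥ 0 the total variation distance between the target distribution and the early-stopped forward marginal satisfies TV(q₀, q_δ) := (1/2) ∑_{y ∈ Y} |q₀(y) − q_δ(y)| ≤ 1 − e^{−δ d}. In particular, if 0 < ε < 1 and δ ≤ ε/d, then TV(q₀, q_δ) ≤ ε. -/
open Matrix Finset

lemma fwdRate_colsum (K d : ℕ) [NeZero K] (z : Fin d → Fin K) :
    ∑ y, fwdRate K d y z = 0 := by
  classical
  have hsplit : ∑ y, fwdRate K d y z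
      = fwdRate K d z z + ∑ y ∈ univ.erase z, fwdRate K d y z :=
    (Finset.add_sum_erase _ _ (mem_univ z)).symm
  have hoff : ∑ y ∈ univ.erase z, fwdRate K d y z
      = (((univ.erase z).filter fun y => ham y z = 1 ∧
          ∀ i, y i ≠ z i → y i = maskTok K).card : ℝ) := by
    rw [← Finset.sum_boole]
    apply Finset.sum_congr rfl
    intro y hy
    have hyz : y ≠ z := (Finset.mem_erase.mp hy).1
    simp [fwdRate, hyz]
  have hkey : (univ.filter fun i => ¬ z i = maskTok K).card =
      ((univ.erase z).filter fun y => ham y z = 1 ∧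
        ∀ i, y i ≠ z i → y i = maskTok K).card := by
    apply Finset.card_bij (fun i _ => Function.update z i (maskTok K))
    · intro i hi
      have hzi : ¬ z i = maskTok K := by simpa using hi
      have hne : Function.update z i (maskTok K) ≠ z := by
        intro h
        have h2 := congrFun h i
        rw [Function.update_self] at h2
        exact hzi h2.symm
      refine Finset.mem_filter.mpr ⟨Finset.mem_erase.mpr ⟨hne, mem_univ _⟩, ?_, ?_⟩
      · have : (univ.filter fun j => Function.update z i (maskTok K) j ≠ z j) = {i} := by
          ext j
          simp only [Finset.mem_filter, Finset.mem_univ, true_and, Finset.mem_singleton]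
          constructor
          · intro hj
            by_contra hji
            exact hj (by simp [Function.update_of_ne hji])
          · rintro rfl
            simp only [Function.update_self]
            exact fun h => hzi h.symm
        simp [ham, this]
      · intro j hj
        by_cases hji : j = i
        · subst hji; simp
        · rw [Function.update_of_ne hji] at hj
          exact absurd rfl hj
    · intro i₁ hi₁ i₂ hi₂ h
      by_contra hne
      have h2 := congrFun h i₁
      rw [Function.update_self, Function.update_of_ne hne] at h2
      have hzi : ¬ z i₁ = maskTok K := by simpa using hi₁
      exact hzi h2.symm
    · intro y hy
      have hy' := Finset.mem_filter.mp hy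
      have hham : ham y z = 1 := hy'.2.1
      have hmask : ∀ i, y i ≠ z i → y i = maskTok K := hy'.2.2
      obtain ⟨i, hi⟩ := Finset.card_eq_one.mp hham
      have hiy : y i ≠ z i := by
        have : i ∈ univ.filter fun j => y j ≠ z j := hi ▸ Finset.mem_singleton_self i
        simpa using this
      have hyi : y i = maskTok K := hmask i hiy
      have hzi : ¬ z i = maskTok K := fun h => hiy (hyi.trans h.symm)
      refine ⟨i, by simpa using hzi, ?_⟩
      funext j
      by_cases hji : j = i
      · subst hji; simp [hyi]
      · rw [Function.update_of_ne hji]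
        by_contra hne
        have : j ∈ univ.filter fun k => y k ≠ z k := by simpa using fun h => hne h.symm
        rw [hi, Finset.mem_singleton] at this
        exact hji this
  have hdiag : fwdRate K d z z = -((d : ℝ) - (numK K d z : ℝ)) := by simp [fwdRate]
  have hcard : (univ.filter fun i => z i = maskTok K).card
      + (univ.filter fun i => ¬ z i = maskTok K).card = d := by
    rw [Finset.card_filter_add_card_filter_not]
    simp
  have : ((univ.filter fun i => ¬ z i = maskTok K).card : ℝ)
      = (d : ℝ) - (numK K d z : ℝ) := by
    have := hcard
    unfold numK
    push_cast [← this]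
    ring
  rw [hsplit, hoff, ← hkey, hdiag, this]
  ring

section TVaux
open NormedSpace

variable {ι : Type*} [Fintype ι] [DecidableEq ι]

noncomputable def entryLM (i j : ι) : Matrix ι ι ℝ →ₗ[ℝ] ℝ where
  toFun M := M i j
  map_add' _ _ := rfl
  map_smul' _ _ := rfl

noncomputable def colsumLM (j : ι) : Matrix ι ι ℝ →ₗ[ℝ] ℝ where
  toFun M := ∑ i, M i j
  map_add' M N := by simp [Finset.sum_add_distrib]
  map_smul' c M := by simp [Finset.mul_sum]

lemma lin_exp (φ : Matrix ι ι ℝ →ₗ[ℝ] ℝ) (A : Matrix ι ι ℝ) :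
    HasSum (fun n : ℕ => ((n.factorial : ℝ))⁻¹ * φ (A ^ n)) (φ (exp A)) := by
  letI : NormedRing (Matrix ι ι ℝ) := Matrix.linftyOpNormedRing
  letI : NormedAlgebra ℝ (Matrix ι ι ℝ) := Matrix.linftyOpNormedAlgebra
  have h1 : HasSum (fun n : ℕ => ((n.factorial : ℝ))⁻¹ • A ^ n) (exp A) := by
    rw [exp_eq_tsum ℝ]
    exact (expSeries_summable' (𝕂 := ℝ) A).hasSum
  have h2 := (LinearMap.toContinuousLinearMap φ).hasSum h1
  simpa using h2

lemma pow_entry_nonneg {M : Matrix ι ι ℝ} (h : ∀ i j, 0 ≤ M i j) :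
    ∀ (n : ℕ) (i j : ι), 0 ≤ (M ^ n) i j := by
  intro n
  induction n with
  | zero =>
    intro i j
    rw [pow_zero, Matrix.one_apply]
    split <;> norm_num
  | succ n ih =>
    intro i j
    rw [pow_succ, Matrix.mul_apply]
    exact Finset.sum_nonneg fun k _ => mul_nonneg (ih i k) (h k j)

lemma pow_colsum {M : Matrix ι ι ℝ} {c : ℝ} (h : ∀ j, ∑ i, M i j = c) :
    ∀ (n : ℕ) (j : ι), ∑ i, (M ^ n) i j = c ^ n := by
  intro n
  induction n with
  | zero => intro j; simp [Matrix.one_apply]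
  | succ n ih =>
    intro j
    rw [pow_succ']
    simp only [Matrix.mul_apply]
    rw [Finset.sum_comm]
    calc ∑ k, ∑ i, M i k * (M ^ n) k j
        = ∑ k, (∑ i, M i k) * (M ^ n) k j := by
          simp [Finset.sum_mul]
      _ = ∑ k, c * (M ^ n) k j := by simp_rw [h]
      _ = c * c ^ n := by rw [← Finset.mul_sum, ih j]
      _ = c ^ (n + 1) := by ring

lemma exp_entry_nonneg {A : Matrix ι ι ℝ} (h : ∀ i j, 0 ≤ A i j) (i j : ι) :
    0 ≤ exp A i j := by
  have hs := lin_exp (entryLM i j) A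
  have := hs.tsum_eq
  simp only [entryLM, LinearMap.coe_mk, AddHom.coe_mk] at this ⊢
  rw [show exp A i j = _ from this.symm]
  exact tsum_nonneg fun n => mul_nonneg (by positivity) (pow_entry_nonneg h n i j)

lemma exp_diag_ge_one {A : Matrix ι ι ℝ} (h : ∀ i j, 0 ≤ A i j) (i : ι) :
    1 ≤ exp A i i := by
  have hs := lin_exp (entryLM i i) A
  simp only [entryLM, LinearMap.coe_mk, AddHom.coe_mk] at hs
  have h0 : ((Nat.factorial 0 : ℝ))⁻¹ * (A ^ 0) i i = 1 := by
    simp [Matrix.one_apply]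
  calc (1 : ℝ) = ((Nat.factorial 0 : ℝ))⁻¹ * (A ^ 0) i i := h0.symm
    _ ≤ ∑' n : ℕ, ((n.factorial : ℝ))⁻¹ * (A ^ n) i i := by
        apply hs.summable.le_tsum
        intro n _
        exact mul_nonneg (by positivity) (pow_entry_nonneg h n i i)
    _ = exp A i i := hs.tsum_eq

lemma exp_colsum {A : Matrix ι ι ℝ} {c : ℝ} (h : ∀ j, ∑ i, A i j = c) (j : ι) :
    ∑ i, exp A i j = Real.exp c := by
  have hs := lin_exp (colsumLM j) A
  simp only [colsumLM, LinearMap.coe_mk, AddHom.coe_mk] at hs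
  have hs2 : HasSum (fun n : ℕ => ((n.factorial : ℝ))⁻¹ * c ^ n)
      (∑ i, exp A i j) := by
    convert hs using 2 with n
    rw [pow_colsum h]
  have hexp : HasSum (fun n : ℕ => ((n.factorial : ℝ))⁻¹ * c ^ n) (Real.exp c) := by
    have h1 : HasSum (fun n : ℕ => ((n.factorial : ℝ))⁻¹ • c ^ n) (exp c) := by
      rw [exp_eq_tsum ℝ]
      exact (expSeries_summable' (𝕂 := ℝ) (x := c)).hasSum
    simpa [Real.exp_eq_exp_ℝ, smul_eq_mul] using h1
  exact hs2.unique hexp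

end TVaux

open NormedSpace in
/-- Under Assumption [A2], the total variation distance between the target
distribution `q₀` and the early-stopped forward marginal `q_δ` is at most
`1 - e^{-δd}`; in particular it is at most `ε` whenever `δ ≤ ε/d`. -/
theorem tv_early_stopping (K d : ℕ) [NeZero K] (hK : 2 ≤ K) (hd : 1 ≤ d)
    (q0 : (Fin d → Fin K) → ℝ)
    (hq0nonneg : ∀ y, 0 ≤ q0 y) (hq0sum : ∑ y, q0 y = 1)
    (hA2 : ∀ y, 0 < q0 y ↔ numK K d y = 0) :
    (∀ δ : ℝ, 0 ≤ δ →
      (1 / 2) * ∑ y, |q0 y - qt K d q0 δ y| ≤ 1 - Real.exp (-(δ * d))) ∧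
    (∀ ε δ : ℝ, 0 < ε → ε < 1 → 0 ≤ δ → δ ≤ ε / d →
      (1 / 2) * ∑ y, |q0 y - qt K d q0 δ y| ≤ ε) := by
  classical
  have main : ∀ δ : ℝ, 0 ≤ δ →
      (1 / 2) * ∑ y, |q0 y - qt K d q0 δ y| ≤ 1 - Real.exp (-(δ * d)) := by
    intro δ hδ
    let ι := (Fin d → Fin K)
    letI : NormedRing (Matrix ι ι ℝ) := Matrix.linftyOpNormedRing
    letI : NormedAlgebra ℝ (Matrix ι ι ℝ) := Matrix.linftyOpNormedAlgebra
    set N : Matrix ι ι ℝ := fwdRate K d + (d : ℝ) • 1 with hN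
    have hNnonneg : ∀ y y' : ι, 0 ≤ N y y' := by
      intro y y'
      by_cases h : y = y'
      · subst h
        have hle : (numK K d y : ℝ) ≥ 0 := by positivity
        have h1 : fwdRate K d y y = -((d : ℝ) - (numK K d y : ℝ)) := if_pos rfl
        simp only [hN, Matrix.add_apply, Matrix.smul_apply, Matrix.one_apply_eq,
          smul_eq_mul, mul_one, h1]
        linarith
      · simp only [hN, Matrix.add_apply, Matrix.smul_apply, Matrix.one_apply_ne h,
          smul_eq_mul, mul_zero, add_zero, fwdRate, if_neg h]
        split <;> norm_num
    have hNcol : ∀ z : ι, ∑ y, N y z = (d : ℝ) := by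
      intro z
      simp only [hN, Matrix.add_apply, Finset.sum_add_distrib, fwdRate_colsum K d z,
        zero_add, Matrix.smul_apply, smul_eq_mul]
      rw [show ∑ y : ι, fwdRate K d y z = 0 from fwdRate_colsum K d z, zero_add,
        Finset.sum_eq_single z]
      · show (d : ℝ) * (1 : Matrix ι ι ℝ) z z = d; simp
      · intro y _ hy; show (d : ℝ) * (1 : Matrix ι ι ℝ) y z = 0; simp [Matrix.one_apply_ne hy]
      · intro h; exact absurd (Finset.mem_univ z) h
    set A : Matrix ι ι ℝ := δ • N with hA
    have hAnonneg : ∀ y y' : ι, 0 ≤ A y y' :=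
      fun y y' => mul_nonneg hδ (hNnonneg y y')
    have hAcol : ∀ z : ι, ∑ y, A y z = δ * d := by
      intro z
      simp only [hA, Matrix.smul_apply, smul_eq_mul, ← Finset.mul_sum, hNcol z]
    set c : ℝ := -(δ * d) with hc
    have hdecomp : δ • fwdRate K d = A + c • (1 : Matrix ι ι ℝ) := by
      rw [hA, hN, smul_add, smul_smul, hc]
      rw [add_assoc, ← add_smul]
      simp
    have hcomm : Commute A (c • (1 : Matrix ι ι ℝ)) :=
      (Commute.one_right A).smul_right c
    have hexpc : exp (c • (1 : Matrix ι ι ℝ)) = Real.exp c • 1 := by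
      have hm := map_exp (algebraMap ℝ (Matrix ι ι ℝ)) (continuous_algebraMap _ _) c
      rw [show exp c = Real.exp c from (congrFun Real.exp_eq_exp_ℝ c).symm,
        Algebra.algebraMap_eq_smul_one, Algebra.algebraMap_eq_smul_one] at hm
      exact hm.symm
    have hS : exp (δ • fwdRate K d) = Real.exp c • exp A := by
      rw [hdecomp, Matrix.exp_add_of_commute _ _ hcomm, hexpc,
        Matrix.mul_smul, mul_one]
    set E : Matrix ι ι ℝ := exp A with hE
    set a : ℝ := Real.exp c with ha
    have ha0 : 0 < a := Real.exp_pos c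
    have ha1 : a ≤ 1 := by
      rw [ha, hc]
      apply Real.exp_le_one_iff.mpr
      have : (0:ℝ) ≤ δ * d := by positivity
      linarith
    have hqt : ∀ y, qt K d q0 δ y = ∑ y', a * E y y' * q0 y' := by
      intro y
      simp only [qt, hS, Matrix.mulVec, dotProduct, Matrix.smul_apply, smul_eq_mul]
      rfl
    have hqt_ge : ∀ y, a * q0 y ≤ qt K d q0 δ y := by
      intro y
      rw [hqt y]
      have h1 : a * (1 : ℝ) * q0 y ≤ a * E y y * q0 y := by
        have hEd : 1 ≤ E y y := exp_diag_ge_one hAnonneg y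
        nlinarith [mul_nonneg (mul_nonneg ha0.le (sub_nonneg.mpr hEd)) (hq0nonneg y)]
      calc a * q0 y = a * (1:ℝ) * q0 y := by ring
        _ ≤ a * E y y * q0 y := h1
        _ ≤ ∑ y', a * E y y' * q0 y' := by
            apply Finset.single_le_sum (f := fun y' => a * E y y' * q0 y')
            · intro y' _
              exact mul_nonneg (mul_nonneg ha0.le (exp_entry_nonneg hAnonneg y y'))
                (hq0nonneg y')
            · exact Finset.mem_univ y
    have hqtsum : ∑ y, qt K d q0 δ y = 1 := by
      simp only [hqt]
      rw [Finset.sum_comm]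
      have : ∀ y' : ι, ∑ y : ι, a * E y y' * q0 y' = q0 y' := by
        intro y'
        rw [← Finset.sum_mul, ← Finset.mul_sum, exp_colsum hAcol y']
        rw [ha, hc, ← Real.exp_add]
        simp
      exact (Finset.sum_congr rfl (fun y' _ => this y')).trans hq0sum
    have hpt : ∀ y, |q0 y - qt K d q0 δ y| ≤
        (1 - a) * q0 y + (qt K d q0 δ y - a * q0 y) := by
      intro y
      have h1 := hqt_ge y
      have h2 := hq0nonneg y
      rw [abs_le]
      constructor <;> nlinarith
    have hsum : ∑ y, |q0 y - qt K d q0 δ y| ≤ 2 * (1 - a) := by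
      calc ∑ y, |q0 y - qt K d q0 δ y|
          ≤ ∑ y, ((1 - a) * q0 y + (qt K d q0 δ y - a * q0 y)) :=
            Finset.sum_le_sum fun y _ => hpt y
        _ = 2 * (1 - a) := by
            rw [Finset.sum_add_distrib, Finset.sum_sub_distrib, ← Finset.mul_sum,
              ← Finset.mul_sum, hq0sum, hqtsum]
            ring
    have : Real.exp (-(δ * d)) = a := by rw [ha, hc]
    linarith
  refine ⟨main, ?_⟩
  intro ε δ hε hε1 hδ hδε
  have h1 := main δ hδ
  have h2 : 1 - Real.exp (-(δ * d)) ≤ δ * d := by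
    have := Real.add_one_le_exp (-(δ * d))
    linarith
  have hd' : (0 : ℝ) < d := by
    have : (1 : ℝ) ≤ d := by exact_mod_cast hd
    linarith
  have h3 : δ * d ≤ ε := by
    have := mul_le_mul_of_nonneg_right hδε hd'.le
    rwa [div_mul_cancel₀ ε hd'.ne'] at this
  linarith
end

section
/- Let Y be a nonempty finite set and let M₁, …, M_n : Y × Y → ℝ be rate matrices, i.e. M_k(y,y') ≥ 0 for y ≠ y' and each column of M_k sums to zero. Let h > 0 satisfy h·‖M_k‖₁ ≤ 1 for every k, where ‖M‖₁ is the maximum absolute column sum. Let μ₀ be a probability vector on Y and define recursively μ^{Eu}_k := (I + h M_k)·μ^{Eu}_{k−1} and μ^{EI}_k := exp(h M_k)·μ^{EI}_{k−1} with μ^{Eu}_0 = μ^{EI}_0 = μ₀. Then every μ^{Eu}_k and μ^{EI}_k is a probability vector, and the total variation distance between the Euler and exponential-integrator samplers after n steps satisfies (1/2) ∑_{y∈Y} |μ^{Eu}_n(y) − μ^{EI}_n(y)| ≤ ∑_{k=1}^{n} (h·‖M_k‖₁)². -/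
open Matrix Finset Nat

/-- The matrix 1-norm: maximum absolute column sum. -/
noncomputable def colNorm {Y : Type*} [Fintype Y] [Nonempty Y]
    (M : Matrix Y Y ℝ) : ℝ :=
  Finset.univ.sup' Finset.univ_nonempty fun y' => ∑ y, |M y y'|

/-- A probability vector on a finite set. -/
def IsProbVec {Y : Type*} [Fintype Y] (p : Y → ℝ) : Prop :=
  (∀ y, 0 ≤ p y) ∧ ∑ y, p y = 1

set_option linter.unusedSectionVars false
set_option maxHeartbeats 1000000
section helpers
variable {Y : Type*} [Fintype Y] [DecidableEq Y] [Nonempty Y]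

lemma col_le_colNorm (M : Matrix Y Y ℝ) (y' : Y) : ∑ y, |M y y'| ≤ colNorm M := by
  rw [colNorm]; exact Finset.le_sup' (fun y' => ∑ y, |M y y'|) (mem_univ y')

lemma colNorm_nonneg (M : Matrix Y Y ℝ) : 0 ≤ colNorm M :=
  le_trans (Finset.sum_nonneg fun _ _ => abs_nonneg _) (col_le_colNorm M (Classical.arbitrary Y))

lemma entry_abs_le_colNorm (M : Matrix Y Y ℝ) (y y' : Y) : |M y y'| ≤ colNorm M :=
  le_trans (Finset.single_le_sum (fun z _ => abs_nonneg (M z y')) (mem_univ y))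
    (col_le_colNorm M y')

lemma colNorm_smul (c : ℝ) (hc : 0 ≤ c) (M : Matrix Y Y ℝ) :
    colNorm (c • M) = c * colNorm M := by
  apply le_antisymm
  · apply Finset.sup'_le
    intro y' _
    have : ∑ y, |(c • M) y y'| = c * ∑ y, |M y y'| := by
      rw [Finset.mul_sum]
      refine Finset.sum_congr rfl fun y _ => ?_
      simp [abs_mul, abs_of_nonneg hc]
    rw [this]
    exact mul_le_mul_of_nonneg_left (col_le_colNorm M y') hc
  · obtain ⟨b, _, hb⟩ := Finset.exists_mem_eq_sup' (Finset.univ_nonempty (α := Y))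
      (fun y' => ∑ y, |M y y'|)
    rw [colNorm, hb]
    calc c * ∑ y, |M y b| = ∑ y, |(c • M) y b| := by
          rw [Finset.mul_sum]; exact Finset.sum_congr rfl fun y _ => by
            simp [abs_mul, abs_of_nonneg hc]
      _ ≤ _ := col_le_colNorm _ b

lemma mulVec_l1_le (A : Matrix Y Y ℝ) (v : Y → ℝ) :
    ∑ y, |(A *ᵥ v) y| ≤ colNorm A * ∑ y, |v y| := by
  calc ∑ y, |(A *ᵥ v) y| ≤ ∑ y, ∑ y', |A y y'| * |v y'| := by
        refine Finset.sum_le_sum fun y _ => ?_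
        simp only [mulVec, dotProduct]
        refine le_trans (Finset.abs_sum_le_sum_abs _ _) (le_of_eq ?_)
        exact Finset.sum_congr rfl fun y' _ => abs_mul _ _
    _ = ∑ y', (∑ y, |A y y'|) * |v y'| := by
        rw [Finset.sum_comm]
        exact Finset.sum_congr rfl fun y' _ => (Finset.sum_mul _ _ _).symm
    _ ≤ ∑ y', colNorm A * |v y'| :=
        Finset.sum_le_sum fun y' _ =>
          mul_le_mul_of_nonneg_right (col_le_colNorm A y') (abs_nonneg _)
    _ = colNorm A * ∑ y, |v y| := (Finset.mul_sum _ _ _).symm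

lemma pow_mulVec_l1_le (A : Matrix Y Y ℝ) (v : Y → ℝ) (j : ℕ) :
    ∑ y, |((A ^ j) *ᵥ v) y| ≤ colNorm A ^ j * ∑ y, |v y| := by
  induction j with
  | zero => simp [Matrix.one_mulVec]
  | succ j ih =>
    have hp : A ^ (j + 1) = A * A ^ j := pow_succ' A j
    rw [hp, ← Matrix.mulVec_mulVec]
    calc ∑ y, |(A *ᵥ (A ^ j *ᵥ v)) y| ≤ colNorm A * ∑ y, |(A ^ j *ᵥ v) y| :=
          mulVec_l1_le _ _
      _ ≤ colNorm A * (colNorm A ^ j * ∑ y, |v y|) :=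
          mul_le_mul_of_nonneg_left ih (colNorm_nonneg A)
      _ = colNorm A ^ (j + 1) * ∑ y, |v y| := by ring

lemma entry_pow_abs_le (A : Matrix Y Y ℝ) (j : ℕ) (y y' : Y) :
    |(A ^ j) y y'| ≤ colNorm A ^ j := by
  have h1 : (A ^ j) y y' = ((A ^ j) *ᵥ Pi.single y' 1) y := by
    simp [mulVec, dotProduct, Pi.single_apply, mul_ite]
  have h2 : |((A ^ j *ᵥ Pi.single y' 1)) y| ≤ ∑ z, |((A ^ j *ᵥ Pi.single y' 1)) z| :=
    Finset.single_le_sum (f := fun z => |((A ^ j *ᵥ Pi.single y' 1)) z|)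
      (fun z _ => abs_nonneg _) (mem_univ y)
  have h3 : ∑ z, |(Pi.single y' 1 : Y → ℝ) z| = 1 := by
    simp [Pi.single_apply, apply_ite]
  have := pow_mulVec_l1_le A (Pi.single y' 1) j
  rw [h3, mul_one] at this
  rw [h1]
  exact h2.trans this


lemma matrix_expSummable (A : Matrix Y Y ℝ) :
    Summable (fun j : ℕ => ((j ! : ℝ))⁻¹ • A ^ j) := by
  letI : SeminormedRing (Matrix Y Y ℝ) := Matrix.linftyOpSemiNormedRing
  letI : NormedRing (Matrix Y Y ℝ) := Matrix.linftyOpNormedRing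
  letI : NormedAlgebra ℝ (Matrix Y Y ℝ) := Matrix.linftyOpNormedAlgebra
  exact NormedSpace.expSeries_summable' A

lemma matrix_exp_eq_tsum (A : Matrix Y Y ℝ) :
    NormedSpace.exp A = ∑' j : ℕ, ((j ! : ℝ))⁻¹ • A ^ j := by
  letI : SeminormedRing (Matrix Y Y ℝ) := Matrix.linftyOpSemiNormedRing
  letI : NormedRing (Matrix Y Y ℝ) := Matrix.linftyOpNormedRing
  letI : NormedAlgebra ℝ (Matrix Y Y ℝ) := Matrix.linftyOpNormedAlgebra
  exact congrFun (NormedSpace.exp_eq_tsum ℝ) A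

lemma exp_entry (A : Matrix Y Y ℝ) (y y' : Y) :
    NormedSpace.exp A y y' = ∑' j : ℕ, ((j ! : ℝ))⁻¹ * (A ^ j) y y' := by
  have hs := matrix_expSummable A
  rw [matrix_exp_eq_tsum A]
  erw [tsum_apply hs, tsum_apply (Pi.summable.mp hs y)]
  simp [smul_eq_mul]

lemma summable_factorial_pow (c : ℝ) : Summable (fun j : ℕ => ((j ! : ℝ))⁻¹ * c ^ j) := by
  have := Real.summable_pow_div_factorial c
  simpa [div_eq_mul_inv, mul_comm] using this

lemma summable_entry (A : Matrix Y Y ℝ) (y y' : Y) :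
    Summable (fun j : ℕ => ((j ! : ℝ))⁻¹ * (A ^ j) y y') := by
  refine Summable.of_norm_bounded (summable_factorial_pow (colNorm A)) fun j => ?_
  calc ‖((j ! : ℝ))⁻¹ * (A ^ j) y y'‖ = ((j ! : ℝ))⁻¹ * |(A ^ j) y y'| := by
        rw [norm_mul, Real.norm_eq_abs, Real.norm_eq_abs, abs_of_nonneg (by positivity)]
    _ ≤ ((j ! : ℝ))⁻¹ * colNorm A ^ j :=
        mul_le_mul_of_nonneg_left (entry_pow_abs_le A j y y') (by positivity)

lemma summable_g (A : Matrix Y Y ℝ) (v : Y → ℝ) (y : Y) :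
    Summable (fun j : ℕ => ((j ! : ℝ))⁻¹ * ((A ^ j) *ᵥ v) y) := by
  refine Summable.of_norm_bounded ((summable_factorial_pow (colNorm A)).mul_right
    (∑ z, |v z|)) fun j => ?_
  have h1 : |((A ^ j) *ᵥ v) y| ≤ ∑ z, |((A ^ j) *ᵥ v) z| :=
    Finset.single_le_sum (f := fun z => |((A ^ j) *ᵥ v) z|) (fun z _ => abs_nonneg _)
      (mem_univ y)
  calc ‖((j ! : ℝ))⁻¹ * ((A ^ j) *ᵥ v) y‖ = ((j ! : ℝ))⁻¹ * |((A ^ j) *ᵥ v) y| := by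
        rw [norm_mul, Real.norm_eq_abs, Real.norm_eq_abs, abs_of_nonneg (by positivity)]
    _ ≤ ((j ! : ℝ))⁻¹ * (colNorm A ^ j * ∑ z, |v z|) :=
        mul_le_mul_of_nonneg_left (h1.trans (pow_mulVec_l1_le A v j)) (by positivity)
    _ = ((j ! : ℝ))⁻¹ * colNorm A ^ j * ∑ z, |v z| := by ring

lemma exp_mulVec (A : Matrix Y Y ℝ) (v : Y → ℝ) (y : Y) :
    (NormedSpace.exp A *ᵥ v) y = ∑' j : ℕ, ((j ! : ℝ))⁻¹ * ((A ^ j) *ᵥ v) y := by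
  have : (NormedSpace.exp A *ᵥ v) y
      = ∑ y', (∑' j : ℕ, ((j ! : ℝ))⁻¹ * (A ^ j) y y') * v y' := by
    simp only [mulVec, dotProduct]
    exact Finset.sum_congr rfl fun y' _ => by rw [exp_entry]
  rw [this]
  have h2 : ∀ y' ∈ Finset.univ,
      Summable (fun j : ℕ => ((j ! : ℝ))⁻¹ * (A ^ j) y y' * v y') :=
    fun y' _ => (summable_entry A y y').mul_right (v y')
  calc ∑ y', (∑' j : ℕ, ((j ! : ℝ))⁻¹ * (A ^ j) y y') * v y'
      = ∑ y', ∑' j : ℕ, ((j ! : ℝ))⁻¹ * (A ^ j) y y' * v y' := by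
        exact Finset.sum_congr rfl fun y' _ => (tsum_mul_right).symm
    _ = ∑' j : ℕ, ∑ y', ((j ! : ℝ))⁻¹ * (A ^ j) y y' * v y' := (Summable.tsum_finsetSum h2).symm
    _ = ∑' j : ℕ, ((j ! : ℝ))⁻¹ * ((A ^ j) *ᵥ v) y := by
        refine tsum_congr fun j => ?_
        simp only [mulVec, dotProduct, Finset.mul_sum, mul_assoc]
end helpers

section stoch
variable {Y : Type*} [Fintype Y] [DecidableEq Y] [Nonempty Y]

/-- sum of mulVec over rows equals weighted column sums -/
lemma sum_mulVec (A : Matrix Y Y ℝ) (v : Y → ℝ) :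
    ∑ y, (A *ᵥ v) y = ∑ y', (∑ y, A y y') * v y' := by
  simp only [mulVec, dotProduct]
  rw [Finset.sum_comm]
  exact Finset.sum_congr rfl fun y' _ => (Finset.sum_mul _ _ _).symm

lemma stoch_preserves (S : Matrix Y Y ℝ) (hpos : ∀ y y', 0 ≤ S y y')
    (hsum : ∀ y', ∑ y, S y y' = 1) (p : Y → ℝ) (hp : IsProbVec p) :
    IsProbVec (S *ᵥ p) := by
  constructor
  · intro y
    exact Finset.sum_nonneg fun y' _ => mul_nonneg (hpos y y') (hp.1 y')
  · rw [_root_.sum_mulVec]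
    simp only [hsum, one_mul]
    exact hp.2

lemma stoch_colNorm (S : Matrix Y Y ℝ) (hpos : ∀ y y', 0 ≤ S y y')
    (hsum : ∀ y', ∑ y, S y y' = 1) : colNorm S = 1 := by
  have : ∀ y', ∑ y, |S y y'| = 1 := fun y' => by
    rw [← hsum y']
    exact Finset.sum_congr rfl fun y _ => abs_of_nonneg (hpos y y')
  rw [colNorm]
  rw [show (fun y' => ∑ y, |S y y'|) = fun _ => (1 : ℝ) from funext this]
  exact Finset.sup'_const _ 1

lemma pow_entry_nonneg_s16 (B : Matrix Y Y ℝ) (hB : ∀ y y', 0 ≤ B y y') (j : ℕ) :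
    ∀ y y', 0 ≤ (B ^ j) y y' := by
  induction j with
  | zero => intro y y'; by_cases hyy : y = y' <;>
      simp [Matrix.one_apply, hyy]
  | succ j ih =>
    intro y y'
    have hp : B ^ (j + 1) = B * B ^ j := pow_succ' B j
    rw [hp]
    exact Finset.sum_nonneg fun z _ => mul_nonneg (hB y z) (ih z y')

lemma matrix_exp_algebraMap (r : ℝ) :
    NormedSpace.exp (algebraMap ℝ (Matrix Y Y ℝ) r)
      = algebraMap ℝ (Matrix Y Y ℝ) (Real.exp r) := by
  letI : SeminormedRing (Matrix Y Y ℝ) := Matrix.linftyOpSemiNormedRing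
  letI : NormedRing (Matrix Y Y ℝ) := Matrix.linftyOpNormedRing
  letI : NormedAlgebra ℝ (Matrix Y Y ℝ) := Matrix.linftyOpNormedAlgebra
  rw [Real.exp_eq_exp_ℝ]
  exact (NormedSpace.algebraMap_exp_comm r).symm

lemma exp_entry_nonneg_s16 (A : Matrix Y Y ℝ) (hoff : ∀ y y', y ≠ y' → 0 ≤ A y y') :
    ∀ y y', 0 ≤ NormedSpace.exp A y y' := by
  intro y y'
  set c : ℝ := colNorm A with hc
  set B : Matrix Y Y ℝ := A + c • (1 : Matrix Y Y ℝ) with hBdef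
  have hB : ∀ z z', 0 ≤ B z z' := by
    intro z z'
    by_cases hz : z = z'
    · subst hz
      have h1 : |A z z| ≤ c := entry_abs_le_colNorm A z z
      have : B z z = A z z + c := by
        simp [hBdef, Matrix.one_apply, Matrix.add_apply]
      rw [this]
      have := neg_abs_le (A z z)
      linarith [abs_le.mp h1]
    · have : B z z' = A z z' := by
        simp [hBdef, Matrix.one_apply, hz, Matrix.add_apply]
      rw [this]
      exact hoff z z' hz
  have hsplit : A = algebraMap ℝ (Matrix Y Y ℝ) (-c) + B := by
    rw [Algebra.algebraMap_eq_smul_one]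
    simp [hBdef]
  have hcomm : Commute (algebraMap ℝ (Matrix Y Y ℝ) (-c)) B :=
    Algebra.commutes' (-c) B
  have hexp : NormedSpace.exp A
      = algebraMap ℝ (Matrix Y Y ℝ) (Real.exp (-c)) * NormedSpace.exp B := by
    rw [hsplit, Matrix.exp_add_of_commute _ _ hcomm, matrix_exp_algebraMap]
  rw [hexp]
  have hmul : (algebraMap ℝ (Matrix Y Y ℝ) (Real.exp (-c)) * NormedSpace.exp B)
      = Real.exp (-c) • NormedSpace.exp B := (Algebra.smul_def _ _).symm
  rw [hmul]
  have hBnn : 0 ≤ NormedSpace.exp B y y' := by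
    rw [exp_entry]
    refine tsum_nonneg fun j => ?_
    exact mul_nonneg (by positivity) (pow_entry_nonneg_s16 B hB j y y')
  have : (Real.exp (-c) • NormedSpace.exp B) y y'
      = Real.exp (-c) * NormedSpace.exp B y y' := rfl
  rw [this]
  positivity

lemma sum_pow_mulVec_zero (A : Matrix Y Y ℝ) (hA : ∀ y', ∑ y, A y y' = 0)
    (v : Y → ℝ) (j : ℕ) (hj : 1 ≤ j) : ∑ y, ((A ^ j) *ᵥ v) y = 0 := by
  obtain ⟨i, rfl⟩ := Nat.exists_eq_add_of_le hj
  have hp : A ^ (1 + i) = A * A ^ i := by rw [add_comm]; exact pow_succ' A i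
  rw [hp, ← Matrix.mulVec_mulVec, _root_.sum_mulVec]
  simp [hA]

lemma exp_colsum_s16 (A : Matrix Y Y ℝ) (hA : ∀ y', ∑ y, A y y' = 0) (v : Y → ℝ) :
    ∑ y, (NormedSpace.exp A *ᵥ v) y = ∑ y, v y := by
  have h1 : ∀ y ∈ Finset.univ, (NormedSpace.exp A *ᵥ v) y
      = ∑' j : ℕ, ((j ! : ℝ))⁻¹ * ((A ^ j) *ᵥ v) y := fun y _ => exp_mulVec A v y
  rw [Finset.sum_congr rfl h1]
  rw [← Summable.tsum_finsetSum (fun y _ => summable_g A v y)]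
  have h2 : ∀ j : ℕ, ∑ y, ((j ! : ℝ))⁻¹ * ((A ^ j) *ᵥ v) y
      = ((j ! : ℝ))⁻¹ * ∑ y, ((A ^ j) *ᵥ v) y := fun j => (Finset.mul_sum _ _ _).symm
  calc ∑' j : ℕ, ∑ y, ((j ! : ℝ))⁻¹ * ((A ^ j) *ᵥ v) y
      = ∑' j : ℕ, ((j ! : ℝ))⁻¹ * ∑ y, ((A ^ j) *ᵥ v) y := tsum_congr h2
    _ = ∑ y, v y := by
        rw [tsum_eq_single 0]
        · simp [Matrix.one_mulVec]
        · intro j hj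
          rw [sum_pow_mulVec_zero A hA v j (Nat.one_le_iff_ne_zero.mpr hj), mul_zero]

end stoch

section localerr
variable {Y : Type*} [Fintype Y] [DecidableEq Y] [Nonempty Y]

lemma two_pow_le_fact (j : ℕ) : (2 : ℕ) ^ (j + 1) ≤ (j + 2)! := by
  induction j with
  | zero => simp [Nat.factorial]
  | succ j ih =>
    calc (2:ℕ) ^ (j + 2) = 2 * 2 ^ (j + 1) := by ring
      _ ≤ 2 * (j + 2)! := Nat.mul_le_mul_left 2 ih
      _ ≤ (j + 3) * (j + 2)! := Nat.mul_le_mul_right _ (by omega)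
      _ = (j + 3)! := rfl

lemma local_err (A : Matrix Y Y ℝ) (hA1 : colNorm A ≤ 1) (p : Y → ℝ) (hp : IsProbVec p) :
    ∑ y, |(NormedSpace.exp A *ᵥ p) y - (((1 : Matrix Y Y ℝ) + A) *ᵥ p) y|
      ≤ colNorm A ^ 2 := by
  have hl1 : ∑ z, |p z| = 1 := by
    rw [← hp.2]; exact Finset.sum_congr rfl fun z _ => abs_of_nonneg (hp.1 z)
  set g : ℕ → Y → ℝ := fun j y => ((j ! : ℝ))⁻¹ * ((A ^ j) *ᵥ p) y with hg
  have hgs : ∀ y, Summable fun j => g j y := fun y => summable_g A p y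
  -- pointwise representation of the difference as a tail tsum
  have hdiff : ∀ y, (NormedSpace.exp A *ᵥ p) y - (((1 : Matrix Y Y ℝ) + A) *ᵥ p) y
      = ∑' j : ℕ, g (j + 2) y := by
    intro y
    have he : (NormedSpace.exp A *ᵥ p) y = ∑' j : ℕ, g j y := exp_mulVec A p y
    have h1 : (((1 : Matrix Y Y ℝ) + A) *ᵥ p) y = g 0 y + g 1 y := by
      simp [hg, Matrix.add_mulVec, Matrix.one_mulVec, Nat.factorial]
    have hsplit : ∑' j : ℕ, g j y = g 0 y + (g 1 y + ∑' j : ℕ, g (j + 2) y) := by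
      rw [Summable.tsum_eq_zero_add (hgs y)]
      congr 1
      have hs1 : Summable fun j => g (j + 1) y := ((summable_nat_add_iff 1).mpr (hgs y))
      rw [Summable.tsum_eq_zero_add hs1]
    rw [he, h1, hsplit]; ring
  have habs : ∀ y, Summable fun j => |g (j + 2) y| :=
    fun y => (((summable_nat_add_iff 2).mpr (hgs y))).abs
  -- bound each column of tail sums
  have hcol : ∀ j : ℕ, ∑ y, |g (j + 2) y| ≤ (1 / 2 : ℝ) ^ (j + 1) * colNorm A ^ 2 := by
    intro j
    have h1 : ∑ y, |g (j + 2) y| = (((j + 2)! : ℝ))⁻¹ * ∑ y, |((A ^ (j + 2)) *ᵥ p) y| := by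
      rw [Finset.mul_sum]
      exact Finset.sum_congr rfl fun y _ => by
        simp [hg, abs_mul, abs_of_nonneg (show (0:ℝ) ≤ (((j + 2)! : ℝ))⁻¹ by positivity)]
    rw [h1]
    have h2 : ∑ y, |((A ^ (j + 2)) *ᵥ p) y| ≤ colNorm A ^ (j + 2) := by
      have := pow_mulVec_l1_le A p (j + 2)
      rwa [hl1, mul_one] at this
    have h3 : colNorm A ^ (j + 2) ≤ colNorm A ^ 2 := by
      have hc0 := colNorm_nonneg A
      calc colNorm A ^ (j + 2) = colNorm A ^ 2 * colNorm A ^ j := by ring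
        _ ≤ colNorm A ^ 2 * 1 :=
            mul_le_mul_of_nonneg_left (pow_le_one₀ hc0 hA1) (by positivity)
        _ = colNorm A ^ 2 := mul_one _
    have h4 : (((j + 2)! : ℝ))⁻¹ ≤ (1 / 2 : ℝ) ^ (j + 1) := by
      rw [one_div, inv_pow]
      refine inv_anti₀ (by positivity) ?_
      calc ((2:ℝ)) ^ (j + 1) = ((2 ^ (j + 1) : ℕ) : ℝ) := by push_cast; ring
        _ ≤ (((j + 2)! : ℕ) : ℝ) := by exact_mod_cast two_pow_le_fact j
    calc (((j + 2)! : ℝ))⁻¹ * ∑ y, |((A ^ (j + 2)) *ᵥ p) y|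
        ≤ (((j + 2)! : ℝ))⁻¹ * colNorm A ^ 2 := by
          refine mul_le_mul_of_nonneg_left (h2.trans h3) (by positivity)
      _ ≤ (1 / 2 : ℝ) ^ (j + 1) * colNorm A ^ 2 :=
          mul_le_mul_of_nonneg_right h4 (by positivity)
  -- assemble
  calc ∑ y, |(NormedSpace.exp A *ᵥ p) y - (((1 : Matrix Y Y ℝ) + A) *ᵥ p) y|
      = ∑ y, |∑' j : ℕ, g (j + 2) y| := by
        exact Finset.sum_congr rfl fun y _ => by rw [hdiff y]
    _ ≤ ∑ y, ∑' j : ℕ, |g (j + 2) y| := by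
        refine Finset.sum_le_sum fun y _ => ?_
        simpa using norm_tsum_le_tsum_norm (f := fun j => g (j + 2) y) (by simpa using habs y)
    _ = ∑' j : ℕ, ∑ y, |g (j + 2) y| := (Summable.tsum_finsetSum fun y _ => habs y).symm
    _ ≤ ∑' j : ℕ, (1 / 2 : ℝ) ^ (j + 1) * colNorm A ^ 2 := by
        have hgeo0 : Summable (fun j : ℕ => (1 / 2 : ℝ) ^ j) :=
          summable_geometric_of_lt_one (by norm_num) (by norm_num)
        have hgeo : Summable (fun j : ℕ => (1 / 2 : ℝ) ^ (j + 1) * colNorm A ^ 2) :=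
          ((hgeo0.mul_left (1 / 2 : ℝ)).mul_right (colNorm A ^ 2)).congr (fun j => by ring)
        refine Summable.tsum_le_tsum hcol ?_ hgeo
        exact Summable.of_nonneg_of_le (fun j => Finset.sum_nonneg fun y _ => abs_nonneg _)
          hcol hgeo
    _ = colNorm A ^ 2 := by
        rw [tsum_mul_right]
        have : ∑' j : ℕ, (1 / 2 : ℝ) ^ (j + 1) = 1 := by
          have h5 : ∑' j : ℕ, (1 / 2 : ℝ) ^ (j + 1)
              = (1 / 2 : ℝ) * ∑' j : ℕ, (1 / 2 : ℝ) ^ j := by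
            rw [tsum_mul_left.symm]
            exact tsum_congr fun j => by ring
          rw [h5, tsum_geometric_two]; norm_num
        rw [this, one_mul]

end localerr

/-- Accumulated discretization error between the Euler sampler
`μ_k = (I + hM_k)·μ_{k-1}` and the exponential-integrator sampler
`μ_k = exp(hM_k)·μ_{k-1}`: all iterates are probability vectors and the total
variation distance after `n` steps is at most `∑_{k=1}^n (h‖M_k‖₁)²`. -/
theorem euler_vs_exponential_integrator {Y : Type*} [Fintype Y] [DecidableEq Y]
    [Nonempty Y] (n : ℕ) (M : ℕ → Matrix Y Y ℝ)
    (hoff : ∀ k, 1 ≤ k → k ≤ n → ∀ y y' : Y, y ≠ y' → 0 ≤ M k y y')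
    (hcol : ∀ k, 1 ≤ k → k ≤ n → ∀ y' : Y, ∑ y, M k y y' = 0)
    (h : ℝ) (hh : 0 < h)
    (hnorm : ∀ k, 1 ≤ k → k ≤ n → h * colNorm (M k) ≤ 1)
    (μ0 : Y → ℝ) (hμ0 : IsProbVec μ0)
    (μEu μEI : ℕ → Y → ℝ)
    (hEu0 : μEu 0 = μ0) (hEI0 : μEI 0 = μ0)
    (hEu : ∀ k, 1 ≤ k → k ≤ n →
      μEu k = ((1 : Matrix Y Y ℝ) + h • M k) *ᵥ μEu (k - 1))
    (hEI : ∀ k, 1 ≤ k → k ≤ n →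
      μEI k = NormedSpace.exp (h • M k) *ᵥ μEI (k - 1)) :
    (∀ k ≤ n, IsProbVec (μEu k) ∧ IsProbVec (μEI k)) ∧
    (1 / 2) * ∑ y, |μEu n y - μEI n y|
      ≤ ∑ k ∈ Finset.Icc 1 n, (h * colNorm (M k)) ^ 2 := by
  have key : ∀ k, k ≤ n → (IsProbVec (μEu k) ∧ IsProbVec (μEI k)) ∧
      ∑ y, |μEu k y - μEI k y| ≤ ∑ j ∈ Finset.Icc 1 k, (h * colNorm (M j)) ^ 2 := by
    intro k
    induction k with
    | zero =>
      intro _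
      refine ⟨⟨by rw [hEu0]; exact hμ0, by rw [hEI0]; exact hμ0⟩, ?_⟩
      simp [hEu0, hEI0]
    | succ k ih =>
      intro hk1
      have hk : k ≤ n := Nat.le_of_succ_le hk1
      obtain ⟨⟨hEuP, hEIP⟩, herr⟩ := ih hk
      have h1k : 1 ≤ k + 1 := Nat.succ_le_succ (Nat.zero_le k)
      set A : Matrix Y Y ℝ := h • M (k + 1) with hA
      have hEuk : μEu (k + 1) = ((1 : Matrix Y Y ℝ) + A) *ᵥ μEu k := by
        simpa using hEu (k + 1) h1k hk1
      have hEIk : μEI (k + 1) = NormedSpace.exp A *ᵥ μEI k := by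
        simpa using hEI (k + 1) h1k hk1
      have hcA : colNorm A = h * colNorm (M (k + 1)) := colNorm_smul h hh.le _
      have hcA1 : colNorm A ≤ 1 := by rw [hcA]; exact hnorm (k + 1) h1k hk1
      have hAoff : ∀ y y', y ≠ y' → 0 ≤ A y y' := fun y y' hyy =>
        mul_nonneg hh.le (hoff (k + 1) h1k hk1 y y' hyy)
      have hAcol0 : ∀ y', ∑ y, A y y' = 0 := by
        intro y'
        have : ∑ y, A y y' = h * ∑ y, M (k + 1) y y' := by
          rw [Finset.mul_sum]
          exact Finset.sum_congr rfl fun y _ => rfl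
        rw [this, hcol (k + 1) h1k hk1 y', mul_zero]
      have hApos : ∀ y y', 0 ≤ ((1 : Matrix Y Y ℝ) + A) y y' := by
        intro y y'
        by_cases hyy : y = y'
        · subst hyy
          have h1 : |A y y| ≤ colNorm A := entry_abs_le_colNorm A y y
          have h2 : ((1 : Matrix Y Y ℝ) + A) y y = 1 + A y y := by
            simp [Matrix.add_apply, Matrix.one_apply]
          rw [h2]
          have := (abs_le.mp (h1.trans hcA1)).1
          linarith
        · have h2 : ((1 : Matrix Y Y ℝ) + A) y y' = A y y' := by
            simp [Matrix.add_apply, Matrix.one_apply, hyy]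
          rw [h2]
          exact hAoff y y' hyy
      have hAsum : ∀ y', ∑ y, ((1 : Matrix Y Y ℝ) + A) y y' = 1 := by
        intro y'
        have : ∀ y, ((1 : Matrix Y Y ℝ) + A) y y' = (1 : Matrix Y Y ℝ) y y' + A y y' :=
          fun y => rfl
        rw [Finset.sum_congr rfl fun y _ => this y, Finset.sum_add_distrib, hAcol0 y']
        simp [Matrix.one_apply]
      have hEuP' : IsProbVec (μEu (k + 1)) := by
        rw [hEuk]; exact stoch_preserves _ hApos hAsum _ hEuP
      have hEIP' : IsProbVec (μEI (k + 1)) := by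
        rw [hEIk]
        constructor
        · intro y
          refine Finset.sum_nonneg fun y' _ => mul_nonneg ?_ (hEIP.1 y')
          exact exp_entry_nonneg_s16 A hAoff y y'
        · rw [exp_colsum_s16 A hAcol0 (μEI k)]; exact hEIP.2
      refine ⟨⟨hEuP', hEIP'⟩, ?_⟩
      have hloc := local_err A hcA1 (μEI k) hEIP
      have hsplit : ∀ y, μEu (k + 1) y - μEI (k + 1) y =
          (((1 : Matrix Y Y ℝ) + A) *ᵥ (fun z => μEu k z - μEI k z)) y
            + ((((1 : Matrix Y Y ℝ) + A) *ᵥ μEI k) y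
              - (NormedSpace.exp A *ᵥ μEI k) y) := by
        intro y
        rw [hEuk, hEIk]
        have : (((1 : Matrix Y Y ℝ) + A) *ᵥ fun z => μEu k z - μEI k z) y
            = (((1 : Matrix Y Y ℝ) + A) *ᵥ μEu k) y
              - (((1 : Matrix Y Y ℝ) + A) *ᵥ μEI k) y := by
          simp only [mulVec, dotProduct, mul_sub, Finset.sum_sub_distrib]
        rw [this]; ring
      have hstep : ∑ y, |μEu (k + 1) y - μEI (k + 1) y|
          ≤ ∑ y, |μEu k y - μEI k y| + (h * colNorm (M (k + 1))) ^ 2 := by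
        calc ∑ y, |μEu (k + 1) y - μEI (k + 1) y|
            ≤ ∑ y, (|(((1 : Matrix Y Y ℝ) + A) *ᵥ (fun z => μEu k z - μEI k z)) y|
              + |(NormedSpace.exp A *ᵥ μEI k) y
                - (((1 : Matrix Y Y ℝ) + A) *ᵥ μEI k) y|) := by
              refine Finset.sum_le_sum fun y _ => ?_
              rw [hsplit y]
              refine le_trans (abs_add_le _ _) ?_
              rw [abs_sub_comm]
          _ = ∑ y, |(((1 : Matrix Y Y ℝ) + A) *ᵥ (fun z => μEu k z - μEI k z)) y|
              + ∑ y, |(NormedSpace.exp A *ᵥ μEI k) y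
                - (((1 : Matrix Y Y ℝ) + A) *ᵥ μEI k) y| := Finset.sum_add_distrib
          _ ≤ colNorm ((1 : Matrix Y Y ℝ) + A) * ∑ y, |μEu k y - μEI k y|
              + colNorm A ^ 2 := add_le_add (mulVec_l1_le _ _) hloc
          _ = ∑ y, |μEu k y - μEI k y| + (h * colNorm (M (k + 1))) ^ 2 := by
              rw [stoch_colNorm _ hApos hAsum, one_mul, hcA]
      calc ∑ y, |μEu (k + 1) y - μEI (k + 1) y|
          ≤ ∑ y, |μEu k y - μEI k y| + (h * colNorm (M (k + 1))) ^ 2 := hstep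
        _ ≤ ∑ j ∈ Finset.Icc 1 k, (h * colNorm (M j)) ^ 2
            + (h * colNorm (M (k + 1))) ^ 2 := add_le_add_left herr _
        _ = ∑ j ∈ Finset.Icc 1 (k + 1), (h * colNorm (M j)) ^ 2 :=
            (Finset.sum_Icc_succ_top h1k _).symm
  refine ⟨fun k hk => (key k hk).1, ?_⟩
  have h2 := (key n le_rfl).2
  have hnn : 0 ≤ ∑ y, |μEu n y - μEI n y| :=
    Finset.sum_nonneg fun y _ => abs_nonneg _
  nlinarith
end
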